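/- arXiv:math/0207102 — 5 statements merged into one kernel-verified Lean document; each statement's English description precedes it below -/
import Mathlib

section
/- Let k ≥ 1 and ℓ ≥ 0 be integers, and let x_0, …, x_ℓ be indeterminates. The set of homogeneous polynomials of degree k in Z[x_0, …, x_ℓ] is generated, as a Z-module, by the k×k minors of the k×(k+ℓ) 'banded' matrix R(k,ℓ) whose (i,j) entry is x_{j-i} (with the convention x_m = 0 for m < 0 or m > ℓ). -/
open MvPolynomial

section Aux

variable {τ : Type*} [DecidableEq τ]

lemma prod_X_eq_monomial {ι : Type*} [DecidableEq ι] (s : Finset ι) (e : ι → τ) :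
    (∏ i ∈ s, (X (e i) : MvPolynomial τ ℤ)) =
      monomial (∑ i ∈ s, Finsupp.single (e i) 1) 1 := by
  induction s using Finset.induction_on with
  | empty => simp
  | insert _ _ h ih =>
      rw [Finset.prod_insert h, Finset.sum_insert h, ih, X, monomial_mul, one_mul]

lemma toMultiset_map_single_sum (d : τ →₀ ℕ) :
    ((Finsupp.toMultiset d).map fun v => Finsupp.single v (1 : ℕ)).sum = d := by
  induction d using Finsupp.induction with
  | zero => simp
  | single_add a b f _ _ ih =>
      rw [Finsupp.toMultiset_add, Multiset.map_add, Multiset.sum_add, ih,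
        Finsupp.toMultiset_single, Multiset.map_nsmul, Multiset.map_singleton,
        Multiset.nsmul_singleton, Multiset.sum_replicate, Finsupp.smul_single, smul_eq_mul, mul_one]

lemma degree_sum_single {k : ℕ} (e : Fin k → τ) :
    Finsupp.degree (∑ i : Fin k, Finsupp.single (e i) 1) = k := by
  rw [Finsupp.degree_eq_weight_one, map_sum]
  simp [Finsupp.weight_apply, Finsupp.sum_single_index]

end Aux

/-- weight of a monomial: sum of squares of the exponents with multiplicity -/
def Wt {m : ℕ} (d : Fin m →₀ ℕ) : ℕ := ∑ v : Fin m, d v * (v : ℕ) ^ 2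

lemma Wt_sum_single {k m : ℕ} (e : Fin k → Fin m) :
    Wt (∑ i : Fin k, Finsupp.single (e i) 1) = ∑ i : Fin k, ((e i : ℕ)) ^ 2 := by
  unfold Wt
  have : ∀ v : Fin m, ((∑ i : Fin k, Finsupp.single (e i) 1) v : ℕ)
      = ∑ i : Fin k, (Finsupp.single (e i) 1 : Fin m →₀ ℕ) v := by
    intro v; rw [Finsupp.finset_sum_apply]
  simp_rw [this, Finset.sum_mul]
  rw [Finset.sum_comm]
  refine Finset.sum_congr rfl fun i _ => ?_
  simp [Finsupp.single_apply, ite_mul]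


lemma strictMono_fin_le_apply {k : ℕ} (f : Fin k → Fin k) (h : StrictMono f) (i : Fin k) :
    i ≤ f i := by
  by_contra hlt
  push_neg at hlt
  classical
  set S : Finset (Fin k) := Finset.univ.filter (fun j => f j < j) with hS
  have hne : S.Nonempty := ⟨i, by simp [hS, hlt]⟩
  set m := S.min' hne with hm
  have hmS : m ∈ S := S.min'_mem hne
  have hfm : f m < m := by simpa [hS] using hmS
  have : f (f m) < f m := h hfm
  have hfmS : f m ∈ S := by simp [hS, this]
  exact absurd (S.min'_le _ hfmS) (not_le.mpr hfm)

lemma perm_eq_one_of_key {k : ℕ} (σ : Equiv.Perm (Fin k))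
    (key : ∀ i j : Fin k, σ i < σ j → i ≤ j) : σ = 1 := by
  have hsm : StrictMono σ := by
    intro i j hij
    rcases lt_trichotomy (σ i) (σ j) with h | h | h
    · exact h
    · exact absurd (σ.injective h) hij.ne
    · exact absurd (key _ _ h) (not_le.mpr hij)
  have hsm' : StrictMono (σ⁻¹ : Equiv.Perm (Fin k)) := by
    intro i j hij
    rcases lt_trichotomy (σ⁻¹ i) (σ⁻¹ j) with h | h | h
    · exact h
    · exact absurd ((σ⁻¹ : Equiv.Perm (Fin k)).injective h) hij.ne
    · have := hsm h
      simp only [Equiv.Perm.inv_def, Equiv.apply_symm_apply] at this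
      exact absurd this (not_lt.mpr hij.le)
  refine Equiv.ext fun i => le_antisymm ?_ (strictMono_fin_le_apply _ hsm i)
  have h2 : i ≤ σ⁻¹ i := strictMono_fin_le_apply _ hsm' i
  have := hsm.monotone h2
  simpa using this

lemma sq_sum_lt {k : ℕ} (c : Fin k → ℕ) (hc : StrictMono c) (σ : Equiv.Perm (Fin k))
    (hσ : σ ≠ 1) :
    (∑ i : Fin k, ((c i : ℤ) - ((i : ℕ) : ℤ)) ^ 2) <
      ∑ i : Fin k, ((c i : ℤ) - ((σ i : ℕ) : ℤ)) ^ 2 := by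
  have hfg : Monovary (fun i : Fin k => ((c i : ℕ) : ℤ)) (fun i : Fin k => ((i : ℕ) : ℤ)) := by
    intro i j hij
    dsimp only at hij ⊢
    have h1 : (i : ℕ) < (j : ℕ) := by exact_mod_cast hij
    have h2 : c i ≤ c j := (hc (Fin.lt_def.mpr h1)).le
    exact_mod_cast h2
  have hnot : ¬ Monovary (fun i : Fin k => ((c i : ℕ) : ℤ))
      ((fun i : Fin k => ((i : ℕ) : ℤ)) ∘ σ) := by
    intro hmv
    apply hσ
    apply perm_eq_one_of_key
    intro i j h
    have h1 : ((fun i : Fin k => ((i : ℕ) : ℤ)) ∘ σ) i < ((fun i : Fin k => ((i : ℕ) : ℤ)) ∘ σ) j := by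
      simp only [Function.comp]
      exact_mod_cast h

    have h2 := hmv h1
    dsimp only at h2
    have h3 : c i ≤ c j := by exact_mod_cast h2
    exact hc.le_iff_le.mp h3
  have hrearr : ∑ i : Fin k, (c i : ℤ) * ((σ i : ℕ) : ℤ) < ∑ i : Fin k, (c i : ℤ) * ((i : ℕ) : ℤ) := by
    have := (Monovary.sum_smul_comp_perm_lt_sum_smul_iff (σ := σ) hfg).mpr hnot
    simpa [smul_eq_mul] using this
  have hsq : ∑ i : Fin k, (((σ i : ℕ) : ℤ)) ^ 2 = ∑ i : Fin k, (((i : ℕ) : ℤ)) ^ 2 :=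
    Equiv.sum_comp σ (fun i : Fin k => (((i : ℕ) : ℤ)) ^ 2)
  have key : ∑ i : Fin k, (((c i : ℤ) - ((i : ℕ) : ℤ)) ^ 2 + (((σ i : ℕ) : ℤ)) ^ 2
        + 2 * ((c i : ℤ) * ((i : ℕ) : ℤ)))
      = ∑ i : Fin k, (((c i : ℤ) - ((σ i : ℕ) : ℤ)) ^ 2 + (((i : ℕ) : ℤ)) ^ 2
        + 2 * ((c i : ℤ) * ((σ i : ℕ) : ℤ))) :=
    Finset.sum_congr rfl fun i _ => by ring
  rw [Finset.sum_add_distrib, Finset.sum_add_distrib, Finset.sum_add_distrib,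
    Finset.sum_add_distrib, ← Finset.mul_sum, ← Finset.mul_sum] at key
  linarith

/-- The banded matrix. -/
noncomputable def Rmat (k ℓ : ℕ) : Matrix (Fin k) (Fin (k + ℓ)) (MvPolynomial (Fin (ℓ + 1)) ℤ) :=
  fun i j =>
    if h : (i : ℕ) ≤ (j : ℕ) ∧ (j : ℕ) - (i : ℕ) ≤ ℓ then
      MvPolynomial.X ⟨(j : ℕ) - (i : ℕ), Nat.lt_succ_of_le h.2⟩
    else 0

theorem monomial_mem (k ℓ : ℕ) (n : ℕ) :
    ∀ d : Fin (ℓ + 1) →₀ ℕ, Finsupp.degree d = k → k * ℓ ^ 2 - Wt d = n →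
    (monomial d (1 : ℤ)) ∈ Submodule.span ℤ
      {p : MvPolynomial (Fin (ℓ + 1)) ℤ |
        ∃ c : Fin k → Fin (k + ℓ), p = ((Rmat k ℓ).submatrix id c).det} := by
  induction n using Nat.strong_induction_on with
  | _ n ih =>
  intro d hd hn
  classical
  set S := Submodule.span ℤ
      {p : MvPolynomial (Fin (ℓ + 1)) ℤ |
        ∃ c : Fin k → Fin (k + ℓ), p = ((Rmat k ℓ).submatrix id c).det} with hSdef
  set l : List (Fin (ℓ + 1)) := Multiset.sort d.toMultiset (· ≤ ·) with hl
  have hsort : l.Pairwise (· ≤ ·) := Multiset.pairwise_sort _ _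
  have hlen : l.length = k := by
    rw [hl, Multiset.length_sort, Finsupp.card_toMultiset]
    exact hd
  set lam : Fin k → Fin (ℓ + 1) := fun i => l.get (Fin.cast hlen.symm i) with hlam
  have hlam_mono : ∀ i j : Fin k, i ≤ j → (lam i : ℕ) ≤ (lam j : ℕ) := by
    intro i j hij
    have h0 : (i : ℕ) ≤ (j : ℕ) := hij
    exact List.Pairwise.rel_get_of_le hsort (show ((Fin.cast hlen.symm i) : ℕ) ≤ ((Fin.cast hlen.symm j) : ℕ) from h0)
  have hc_lt : ∀ i : Fin k, (lam i : ℕ) + (i : ℕ) < k + ℓ := by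
    intro i
    have h1 : (lam i : ℕ) ≤ ℓ := Fin.is_le _
    have h2 := i.isLt
    omega
  set c : Fin k → Fin (k + ℓ) := fun i => ⟨(lam i : ℕ) + i, hc_lt i⟩ with hcdef
  have hcval : ∀ i : Fin k, (c i : ℕ) = (lam i : ℕ) + i := fun i => rfl
  have hc_mono : StrictMono fun i : Fin k => (c i : ℕ) := by
    intro i j hij
    have h1 := hlam_mono i j hij.le
    have h2 : (i : ℕ) < (j : ℕ) := hij
    simp only [hcval]
    omega
  have hd_rep : d = ∑ i : Fin k, Finsupp.single (lam i) 1 := by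
    calc d = ((d.toMultiset).map fun v => Finsupp.single v 1).sum :=
          (toMultiset_map_single_sum d).symm
    _ = ((↑l : Multiset (Fin (ℓ + 1))).map fun v => Finsupp.single v 1).sum := by
          rw [hl, Multiset.sort_eq]
    _ = (l.map fun v => Finsupp.single v 1).sum := by
          rw [Multiset.map_coe, Multiset.sum_coe]
    _ = ∑ j : Fin l.length, Finsupp.single l[(j : ℕ)] 1 :=
          (Fin.sum_univ_fun_getElem l fun v => Finsupp.single v 1).symm
    _ = ∑ i : Fin k, Finsupp.single (lam i) 1 :=
          Fintype.sum_equiv (finCongr hlen) _ _ (fun j => rfl)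
  have hdiag : ∀ i : Fin k, (Rmat k ℓ) i (c i) = X (lam i) := by
    intro i
    have hcond : (i : ℕ) ≤ (c i : ℕ) ∧ (c i : ℕ) - (i : ℕ) ≤ ℓ := by
      have h1 : (lam i : ℕ) ≤ ℓ := Fin.is_le _
      rw [hcval]
      omega
    rw [Rmat, dif_pos hcond]
    congr 1
    apply Fin.ext
    simp only [hcval]
    omega
  have hdet : ((Rmat k ℓ).submatrix id c).det
      = monomial d 1 + ∑ σ ∈ Finset.univ.erase (1 : Equiv.Perm (Fin k)),
          Equiv.Perm.sign σ • ∏ i : Fin k, (Rmat k ℓ) (σ i) (c i) := by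
    rw [Matrix.det_apply]
    simp only [Matrix.submatrix_apply, id_eq]
    rw [← Finset.add_sum_erase _ _ (Finset.mem_univ (1 : Equiv.Perm (Fin k)))]
    congr 1
    simp only [Equiv.Perm.sign_one, one_smul, Equiv.Perm.one_apply]
    calc ∏ i : Fin k, Rmat k ℓ i (c i) = ∏ i : Fin k, X (lam i) :=
          Finset.prod_congr rfl fun i _ => hdiag i
    _ = monomial (∑ i : Fin k, Finsupp.single (lam i) 1) 1 := prod_X_eq_monomial _ _
    _ = monomial d 1 := by rw [← hd_rep]
  have hdet_mem : ((Rmat k ℓ).submatrix id c).det ∈ S :=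
    Submodule.subset_span ⟨c, rfl⟩
  have hterm_mem : ∀ σ ∈ Finset.univ.erase (1 : Equiv.Perm (Fin k)),
      Equiv.Perm.sign σ • ∏ i : Fin k, (Rmat k ℓ) (σ i) (c i) ∈ S := by
    intro σ hσ
    have hσ1 : σ ≠ 1 := (Finset.mem_erase.mp hσ).1
    rw [Units.smul_def]
    apply Submodule.smul_mem
    by_cases hval : ∀ i : Fin k, ((σ i : ℕ)) ≤ (c i : ℕ) ∧ (c i : ℕ) - (σ i : ℕ) ≤ ℓ
    · set e : Fin k → Fin (ℓ + 1) :=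
        fun i => ⟨(c i : ℕ) - (σ i : ℕ), Nat.lt_succ_of_le (hval i).2⟩ with he
      have hentry : ∀ i : Fin k, (Rmat k ℓ) (σ i) (c i) = X (e i) := by
        intro i
        rw [Rmat, dif_pos (hval i)]
      rw [Finset.prod_congr rfl fun i _ => hentry i, prod_X_eq_monomial]
      set d' := ∑ i : Fin k, Finsupp.single (e i) 1 with hd'
      have hdeg' : Finsupp.degree d' = k := degree_sum_single e
      have hWd : Wt d = ∑ i : Fin k, ((lam i : ℕ)) ^ 2 := by rw [hd_rep, Wt_sum_single]
      have hWd' : Wt d' = ∑ i : Fin k, ((e i : ℕ)) ^ 2 := Wt_sum_single e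
      have hzd : (Wt d : ℤ) = ∑ i : Fin k, (((c i : ℕ) : ℤ) - ((i : ℕ) : ℤ)) ^ 2 := by
        rw [hWd]
        push_cast
        refine Finset.sum_congr rfl fun i _ => ?_
        rw [hcval i]; push_cast
        ring
      have hzd' : (Wt d' : ℤ) = ∑ i : Fin k, (((c i : ℕ) : ℤ) - ((σ i : ℕ) : ℤ)) ^ 2 := by
        rw [hWd']
        push_cast
        refine Finset.sum_congr rfl fun i _ => ?_
        have h1 : ((e i : ℕ) : ℤ) = ((c i : ℕ) : ℤ) - ((σ i : ℕ) : ℤ) := by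
          have h2 := (hval i).1
          have h3 : (e i : ℕ) = (c i : ℕ) - (σ i : ℕ) := rfl
          rw [h3, Nat.cast_sub h2]
        have h4 : ((c i : ℕ) : ℤ) = ((lam i : ℕ) : ℤ) + ((i : ℕ) : ℤ) := by
          exact_mod_cast congrArg (Nat.cast : ℕ → ℤ) (hcval i)
        rw [h1, h4]
      have hlt : Wt d < Wt d' := by
        have h4 := sq_sum_lt (fun i => (c i : ℕ)) hc_mono σ hσ1
        have h5 : (Wt d : ℤ) < (Wt d' : ℤ) := by rw [hzd, hzd']; exact h4
        exact_mod_cast h5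
      have hbound : Wt d' ≤ k * ℓ ^ 2 := by
        rw [hWd']
        calc ∑ i : Fin k, ((e i : ℕ)) ^ 2 ≤ ∑ _i : Fin k, ℓ ^ 2 :=
              Finset.sum_le_sum fun i _ => Nat.pow_le_pow_left (Fin.is_le _) 2
        _ = k * ℓ ^ 2 := by simp [Finset.card_univ, mul_comm]
      exact ih _ (by omega) d' hdeg' rfl
    · push_neg at hval
      obtain ⟨i, hi⟩ := hval
      have hz : (Rmat k ℓ) (σ i) (c i) = 0 := by
        rw [Rmat, dif_neg]
        intro h
        exact absurd h.2 (not_le.mpr (hi h.1))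
      rw [Finset.prod_eq_zero (Finset.mem_univ i) hz]
      exact Submodule.zero_mem S
  have hrw : monomial d (1 : ℤ) = ((Rmat k ℓ).submatrix id c).det
      - ∑ σ ∈ Finset.univ.erase (1 : Equiv.Perm (Fin k)),
          Equiv.Perm.sign σ • ∏ i : Fin k, (Rmat k ℓ) (σ i) (c i) := by
    rw [hdet]; ring
  rw [hrw]
  exact Submodule.sub_mem S hdet_mem (Submodule.sum_mem S hterm_mem)

/-- Let `k ≥ 1`, `ℓ ≥ 0` and let `x_0, …, x_ℓ` be indeterminates.
The homogeneous polynomials of degree `k` in `ℤ[x_0,…,x_ℓ]` are generated, as a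
`ℤ`-module, by the `k×k` minors of the `k×(k+ℓ)` banded matrix `R(k,ℓ)` whose
`(i,j)` entry is `x_{j-i}` (with `x_m = 0` for `m < i` or `m > ℓ + i`). -/
theorem stmt2 (k ℓ : ℕ) (hk : 1 ≤ k) :
    letI R : Matrix (Fin k) (Fin (k + ℓ)) (MvPolynomial (Fin (ℓ + 1)) ℤ) :=
      fun i j =>
        if h : (i : ℕ) ≤ (j : ℕ) ∧ (j : ℕ) - (i : ℕ) ≤ ℓ then
          MvPolynomial.X ⟨(j : ℕ) - (i : ℕ), Nat.lt_succ_of_le h.2⟩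
        else 0
    Submodule.span ℤ
        {p : MvPolynomial (Fin (ℓ + 1)) ℤ |
          ∃ c : Fin k → Fin (k + ℓ), p = (R.submatrix id c).det}
      = MvPolynomial.homogeneousSubmodule (Fin (ℓ + 1)) ℤ k := by
  show Submodule.span ℤ
      {p : MvPolynomial (Fin (ℓ + 1)) ℤ |
        ∃ c : Fin k → Fin (k + ℓ), p = ((Rmat k ℓ).submatrix id c).det}
    = MvPolynomial.homogeneousSubmodule (Fin (ℓ + 1)) ℤ k
  apply le_antisymm
  · rw [Submodule.span_le]
    rintro p ⟨c, rfl⟩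
    rw [SetLike.mem_coe, mem_homogeneousSubmodule]
    rw [Matrix.det_apply]
    apply IsHomogeneous.sum
    intro σ _
    rw [Units.smul_def, ← mem_homogeneousSubmodule]
    apply Submodule.smul_mem
    rw [mem_homogeneousSubmodule]
    have hprod := IsHomogeneous.prod (σ := Fin (ℓ + 1)) (R := ℤ) Finset.univ
      (fun i : Fin k => ((Rmat k ℓ).submatrix id c) (σ i) i) (fun _ => 1) ?_
    · simpa using hprod
    · intro i _
      simp only [Matrix.submatrix_apply, id_eq, Rmat]
      split_ifs
      · exact isHomogeneous_X _ _
      · exact isHomogeneous_zero _ _ _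
  · intro p hp
    rw [mem_homogeneousSubmodule] at hp
    rw [p.as_sum]
    apply Submodule.sum_mem
    intro v hv
    have hdeg : Finsupp.degree v = k := by
      have h1 := hp (MvPolynomial.mem_support_iff.mp hv)
      rw [Finsupp.degree_eq_weight_one]
      exact h1
    have h2 : (monomial v) (coeff v p) = (coeff v p) • (monomial v (1 : ℤ)) := by
      rw [MvPolynomial.smul_monomial, smul_eq_mul, mul_one]
    rw [h2]
    exact Submodule.smul_mem _ _ (monomial_mem k ℓ _ v hdeg rfl)
end

section
/- Let K be a number field, ξ an element of the completion K_w at a place w, and let P, Q ∈ K[T] be relatively prime nonzero polynomials of degree at most n. Then 1 ≤ (2n)! · max{ |P(ξ)|_w / ∥P∥_w , |Q(ξ)|_w / ∥Q∥_w } · H(P)^{deg Q} · H(Q)^{deg P}. -/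
open Polynomial Finset

/-- An abstract family of normalized absolute values on a field `K`, indexed by a set
of "places" `ι`, satisfying the product formula.  This axiomatizes the places of a
number field `K` of degree `d` over `ℚ`, normalized as in Bombieri–Vaaler: `e i = d_v/d`
is the local weight at an archimedean place (the weights sum to `1`), while `e i = 0`
at an ultrametric place. -/
structure PlaceData (K : Type*) [Field K] (ι : Type*) where
  /-- the normalized absolute value at each place -/
  v : ι → AbsoluteValue K ℝ
  /-- the local weight `d_v/d` at archimedean places, `0` at ultrametric places -/
  e : ι → ℝ
  e_nonneg : ∀ i, 0 ≤ e i
  e_sum : ∑ᶠ i, e i = 1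
  /-- places of weight `0` are ultrametric -/
  ultra : ∀ i, e i = 0 → ∀ x y : K, v i (x + y) ≤ max (v i x) (v i y)
  /-- at an archimedean place of weight `e i`, `|m·x| = m^{e i}·|x|` for natural `m` -/
  arch_nat : ∀ i, 0 < e i → ∀ (x : K) (m : ℕ), v i ((m : K) * x) ≤ (m : ℝ) ^ (e i) * v i x
  mulSupport_finite : ∀ x : K, x ≠ 0 → (Function.mulSupport fun i => v i x).Finite
  product_formula : ∀ x : K, x ≠ 0 → ∏ᶠ i, v i x = 1

variable {K : Type*} [Field K] {ι : Type*}

/-- the `v`-adic norm `‖P‖_v` of a polynomial: the maximal absolute value of its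
coefficients. -/
noncomputable def PlaceData.polyNorm (pd : PlaceData K ι) (i : ι) (P : K[X]) : ℝ :=
  (Finset.range (P.natDegree + 1)).sup' Finset.nonempty_range_add_one fun m => pd.v i (P.coeff m)

/-- the (absolute, multiplicative) height `H(P) = ∏_v ‖P‖_v` of a polynomial. -/
noncomputable def PlaceData.polyHeight (pd : PlaceData K ι) (P : K[X]) : ℝ :=
  ∏ᶠ i, pd.polyNorm i P

section Aux

open Filter Real Topology Function

variable {F : Type*} [Field F]

private lemma card_piAntidiag_le {α : Type*} [DecidableEq α] (s : Finset α) (t : ℕ) :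
    (Finset.piAntidiag s t).card ≤ (t + 1) ^ s.card := by
  classical
  have hb : ∀ k ∈ piAntidiag s t, ∀ i, k i ≤ t := by
    intro k hk i
    rw [Finset.mem_piAntidiag] at hk
    by_cases hi : i ∈ s
    · exact hk.1 ▸ Finset.single_le_sum (f := k) (fun _ _ => Nat.zero_le _) hi
    · have : k i = 0 := by
        by_contra h
        exact hi (hk.2 i h)
      omega
  calc (piAntidiag s t).card
      ≤ (Finset.univ : Finset (s → Fin (t + 1))).card := by
        apply Finset.card_le_card_of_injOn
          (fun k (i : s) => (⟨min (k i) t, by omega⟩ : Fin (t + 1)))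
        · intro k _; exact Finset.mem_univ _
        · intro k hk k' hk' h
          funext i
          by_cases hi : i ∈ s
          · have := congrFun h ⟨i, hi⟩
            simp only [Fin.mk.injEq] at this
            rw [min_eq_left (hb k hk i), min_eq_left (hb k' hk' i)] at this
            exact this
          · have h1 : k i = 0 := by
              by_contra hc
              exact hi ((Finset.mem_piAntidiag.mp hk).2 i hc)
            have h2 : k' i = 0 := by
              by_contra hc
              exact hi ((Finset.mem_piAntidiag.mp hk').2 i hc)
            rw [h1, h2]
    _ = (t + 1) ^ s.card := by
        rw [Finset.card_univ, Fintype.card_fun, Fintype.card_fin, Fintype.card_coe]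

/-- Key analytic lemma: an absolute value satisfying `|m| ≤ m^e` on naturals satisfies
`|∑ x_j| ≤ (#s)^e · max |x_j|`. -/
private lemma abv_sum_le_rpow (a : AbsoluteValue F ℝ) {e : ℝ} (he0 : 0 ≤ e)
    (hnat : ∀ m : ℕ, a (m : F) ≤ (m : ℝ) ^ e)
    {α : Type*} (s : Finset α) (hs : s.Nonempty) (f : α → F) :
    a (∑ j ∈ s, f j) ≤ (s.card : ℝ) ^ e * s.sup' hs fun j => a (f j) := by
  classical
  set M := s.sup' hs fun j => a (f j) with hMdef
  obtain ⟨j0, hj0⟩ := id hs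
  have hM0 : 0 ≤ M := by
    rw [hMdef]; exact le_trans (a.nonneg (f j0)) (Finset.le_sup' (fun j => a (f j)) hj0)
  have hfM : ∀ i ∈ s, a (f i) ≤ M := by
    intro i hi; rw [hMdef]; exact Finset.le_sup' (fun j => a (f j)) hi
  rcases hM0.eq_or_lt with hM | hM
  · have hz : ∀ i ∈ s, f i = 0 := fun i hi =>
      a.eq_zero.mp (le_antisymm (hM ▸ hfM i hi) (a.nonneg _))
    rw [Finset.sum_eq_zero hz, map_zero, ← hM, mul_zero]
  · have hcard : (0 : ℝ) < s.card := by
      exact_mod_cast Finset.card_pos.mpr ⟨j0, hj0⟩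
    set Kc := (s.card : ℝ) ^ e * M with hKc
    have hKc0 : 0 < Kc := mul_pos (Real.rpow_pos_of_pos hcard e) hM
    by_contra hlt
    push_neg at hlt
    set r := a (∑ j ∈ s, f j) / Kc with hrdef
    have hr1 : 1 < r := (one_lt_div hKc0).mpr hlt
    have hr0 : (0 : ℝ) < r := lt_trans one_pos hr1
    have key : ∀ t : ℕ, a (∑ j ∈ s, f j) ^ t ≤ ((t : ℝ) + 1) ^ s.card * Kc ^ t := by
      intro t
      have hterm : ∀ k ∈ piAntidiag s t,
          a ((Nat.multinomial s k : F) * ∏ i ∈ s, f i ^ k i)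
            ≤ ((s.card : ℝ) ^ e) ^ t * M ^ t := by
        intro k hk
        rw [map_mul]
        have h1 : a ((Nat.multinomial s k : F)) ≤ ((s.card : ℝ) ^ t) ^ e := by
          refine (hnat _).trans ?_
          refine Real.rpow_le_rpow (Nat.cast_nonneg _) ?_ he0
          have hsum : ∑ k' ∈ piAntidiag s t, Nat.multinomial s k' = s.card ^ t := by
            have h := Finset.sum_pow_eq_sum_piAntidiag s (fun _ => (1 : ℕ)) t
            simpa using h.symm
          have hle : Nat.multinomial s k ≤ s.card ^ t :=
            hsum ▸ Finset.single_le_sum (fun _ _ => Nat.zero_le _) hk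
          exact_mod_cast hle
        have h2 : a (∏ i ∈ s, f i ^ k i) ≤ M ^ t := by
          rw [a.map_prod]
          have hpw : ∀ i ∈ s, a (f i ^ k i) ≤ M ^ k i := fun i hi => by
            rw [map_pow]; exact pow_le_pow_left₀ (a.nonneg _) (hfM i hi) _
          refine le_trans (Finset.prod_le_prod (fun i _ => a.nonneg _) hpw) ?_
          rw [Finset.prod_pow_eq_pow_sum, (Finset.mem_piAntidiag.mp hk).1]
        calc a ((Nat.multinomial s k : F)) * a (∏ i ∈ s, f i ^ k i)
            ≤ ((s.card : ℝ) ^ t) ^ e * M ^ t := by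
              refine mul_le_mul h1 h2 (a.nonneg _) (Real.rpow_nonneg (by positivity) _)
          _ = ((s.card : ℝ) ^ e) ^ t * M ^ t := by
              rw [← Real.rpow_natCast ((s.card : ℝ)) t, ← Real.rpow_mul hcard.le,
                mul_comm (t : ℝ) e, Real.rpow_mul hcard.le, Real.rpow_natCast]
      have hcardb : ((piAntidiag s t).card : ℝ) ≤ ((t : ℝ) + 1) ^ s.card := by
        have h := card_piAntidiag_le s t
        calc ((piAntidiag s t).card : ℝ) ≤ (((t + 1) ^ s.card : ℕ) : ℝ) := by exact_mod_cast h
          _ = ((t : ℝ) + 1) ^ s.card := by push_cast; ring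
      calc a (∑ j ∈ s, f j) ^ t = a ((∑ j ∈ s, f j) ^ t) := (map_pow a _ t).symm
        _ = a (∑ k ∈ piAntidiag s t, (Nat.multinomial s k : F) * ∏ i ∈ s, f i ^ k i) := by
            rw [Finset.sum_pow_eq_sum_piAntidiag s f t]
        _ ≤ ∑ k ∈ piAntidiag s t, a ((Nat.multinomial s k : F) * ∏ i ∈ s, f i ^ k i) :=
            a.sum_le _ _
        _ ≤ ∑ _k ∈ piAntidiag s t, ((s.card : ℝ) ^ e) ^ t * M ^ t := Finset.sum_le_sum hterm
        _ = ((piAntidiag s t).card : ℝ) * (((s.card : ℝ) ^ e) ^ t * M ^ t) := by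
            rw [Finset.sum_const, nsmul_eq_mul]
        _ ≤ ((t : ℝ) + 1) ^ s.card * (((s.card : ℝ) ^ e) ^ t * M ^ t) := by
            refine mul_le_mul_of_nonneg_right hcardb ?_
            have h : (0:ℝ) ≤ ((s.card : ℝ) ^ e) ^ t := pow_nonneg (Real.rpow_nonneg hcard.le _) _
            positivity
        _ = ((t : ℝ) + 1) ^ s.card * Kc ^ t := by rw [hKc, mul_pow]
    have hub : ∀ t : ℕ, (1 : ℝ) ≤ ((t : ℝ) + 1) ^ s.card / r ^ t := by
      intro t
      have h1 : r ^ t ≤ ((t : ℝ) + 1) ^ s.card := by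
        rw [hrdef, div_pow, div_le_iff₀ (by positivity)]
        exact key t
      have h2 : (0 : ℝ) < r ^ t := by positivity
      rw [le_div_iff₀ h2, one_mul]
      exact h1
    have htend : Tendsto (fun t : ℕ => ((t : ℝ) + 1) ^ s.card / r ^ t) atTop (𝓝 0) := by
      have h := (tendsto_pow_const_div_const_pow_of_one_lt s.card hr1).comp
        (tendsto_add_atTop_nat 1)
      have heq : (fun t : ℕ => ((t : ℝ) + 1) ^ s.card / r ^ t)
          = fun t : ℕ => r * (((↑(t + 1) : ℝ)) ^ s.card / r ^ (t + 1)) := by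
        funext t
        push_cast
        rw [pow_succ]
        field_simp
      rw [heq]
      simpa using h.const_mul r
    obtain ⟨t, ht⟩ := (htend.eventually_lt_const (by norm_num : (0 : ℝ) < 1)).exists
    exact absurd (hub t) (not_le.mpr ht)

/-- Bound on the absolute value of a determinant whose entries are bounded columnwise,
with a refined bound on one distinguished row `r`. -/
private lemma abv_det_le (a : AbsoluteValue F ℝ) {e : ℝ} (he0 : 0 ≤ e)
    (hnat : ∀ m : ℕ, a (m : F) ≤ (m : ℝ) ^ e)
    {N : ℕ} (A : Matrix (Fin N) (Fin N) F) (r : Fin N) {c : ℝ}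
    {g : Fin N → ℝ}
    (hA : ∀ i j, a (A i j) ≤ g j * (if i = r then c else 1)) :
    a A.det ≤ (N.factorial : ℝ) ^ e * (c * ∏ j, g j) := by
  classical
  rw [Matrix.det_apply]
  have h1 := abv_sum_le_rpow a he0 hnat Finset.univ Finset.univ_nonempty
      (fun σ : Equiv.Perm (Fin N) => Equiv.Perm.sign σ • ∏ i, A (σ i) i)
  refine h1.trans ?_
  have hcard : ((Finset.univ : Finset (Equiv.Perm (Fin N))).card : ℝ) = (N.factorial : ℝ) := by
    rw [Finset.card_univ, Fintype.card_perm, Fintype.card_fin]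
  rw [hcard]
  refine mul_le_mul_of_nonneg_left ?_ (Real.rpow_nonneg (Nat.cast_nonneg _) e)
  apply Finset.sup'_le
  intro σ _
  have habs : a (Equiv.Perm.sign σ • ∏ i, A (σ i) i) = a (∏ i, A (σ i) i) := by
    rcases Int.units_eq_one_or (Equiv.Perm.sign σ) with h | h <;> simp [h]
  rw [habs, a.map_prod]
  have hb : ∀ i : Fin N, a (A (σ i) i) ≤ g i * (if i = σ.symm r then c else 1) := by
    intro i
    have h := hA (σ i) i
    have hiff : (σ i = r) ↔ (i = σ.symm r) := by
      rw [Equiv.apply_eq_iff_eq_symm_apply]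
    simp only [hiff] at h
    exact h
  calc ∏ i, a (A (σ i) i) ≤ ∏ i, g i * (if i = σ.symm r then c else 1) :=
        Finset.prod_le_prod (fun i _ => a.nonneg _) (fun i _ => hb i)
    _ = (∏ i, g i) * ∏ i, (if i = σ.symm r then c else 1) := by rw [Finset.prod_mul_distrib]
    _ = (∏ i, g i) * c := by
        rw [Finset.prod_ite_eq' Finset.univ (σ.symm r) (fun _ => c), if_pos (Finset.mem_univ _)]
    _ = c * ∏ i, g i := mul_comm _ _

end Aux

section Sylvester

variable (P Q : K[X])

/-- the polynomial whose coefficients form the `j`-th column of the Sylvester matrix -/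
private noncomputable def colPoly (j : ℕ) : K[X] :=
  if j < Q.natDegree then P * X ^ j else Q * X ^ (j - Q.natDegree)

/-- the Sylvester matrix of `P` and `Q` -/
private noncomputable def syl :
    Matrix (Fin (Q.natDegree + P.natDegree)) (Fin (Q.natDegree + P.natDegree)) K :=
  fun i j => (colPoly P Q (j : ℕ)).coeff (i : ℕ)

private lemma colPoly_natDegree_lt {j : ℕ} (hj : j < Q.natDegree + P.natDegree) :
    (colPoly P Q j).natDegree < Q.natDegree + P.natDegree := by
  unfold colPoly
  split_ifs with h
  · refine lt_of_le_of_lt natDegree_mul_le ?_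
    rw [natDegree_X_pow]
    omega
  · refine lt_of_le_of_lt natDegree_mul_le ?_
    rw [natDegree_X_pow]
    omega

private lemma polyNorm_nonneg (pd : PlaceData K ι) (i : ι) (P : K[X]) :
    0 ≤ pd.polyNorm i P :=
  le_trans ((pd.v i).nonneg (P.coeff 0))
    (Finset.le_sup' (fun m => pd.v i (P.coeff m)) (Finset.mem_range.mpr (Nat.succ_pos _)))

private lemma polyNorm_pos (pd : PlaceData K ι) (i : ι) {P : K[X]} (hP : P ≠ 0) :
    0 < pd.polyNorm i P :=
  lt_of_lt_of_le ((pd.v i).pos (Polynomial.leadingCoeff_ne_zero.mpr hP))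
    (Finset.le_sup' (fun m => pd.v i (P.coeff m)) (Finset.mem_range.mpr (Nat.lt_succ_self _)))

private lemma coeff_le_polyNorm (pd : PlaceData K ι) (i : ι) (P : K[X]) (m : ℕ) :
    pd.v i (P.coeff m) ≤ pd.polyNorm i P := by
  by_cases h : m ≤ P.natDegree
  · exact Finset.le_sup' (fun m => pd.v i (P.coeff m)) (Finset.mem_range.mpr (Nat.lt_succ_of_le h))
  · rw [Polynomial.coeff_eq_zero_of_natDegree_lt (not_le.mp h), map_zero]
    exact polyNorm_nonneg pd i P

private lemma syl_entry_bound (pd : PlaceData K ι) (i' : ι)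
    (i j : Fin (Q.natDegree + P.natDegree)) :
    pd.v i' (syl P Q i j) ≤
      if (j : ℕ) < Q.natDegree then pd.polyNorm i' P else pd.polyNorm i' Q := by
  unfold syl colPoly
  split_ifs with h
  · rw [Polynomial.coeff_mul_X_pow']
    split_ifs with h2
    · exact coeff_le_polyNorm pd i' P _
    · rw [map_zero]; exact polyNorm_nonneg pd i' P
  · rw [Polynomial.coeff_mul_X_pow']
    split_ifs with h2
    · exact coeff_le_polyNorm pd i' Q _
    · rw [map_zero]; exact polyNorm_nonneg pd i' Q

private lemma syl_det_ne_zero (hQ : Q ≠ 0) (hcop : IsCoprime P Q) :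
    (syl P Q).det ≠ 0 := by
  classical
  intro hdet
  obtain ⟨u, hu, hmul⟩ := Matrix.exists_mulVec_eq_zero_iff.mpr hdet
  set A : K[X] := ∑ j ∈ Finset.univ.filter (fun j : Fin (Q.natDegree + P.natDegree) => (j : ℕ) < Q.natDegree),
      u j • X ^ (j : ℕ) with hA
  set B : K[X] := ∑ j ∈ Finset.univ.filter (fun j : Fin (Q.natDegree + P.natDegree) => ¬ (j : ℕ) < Q.natDegree),
      u j • X ^ ((j : ℕ) - Q.natDegree) with hB
  have hR : P * A + Q * B = 0 := by
    have hsum : P * A + Q * B = ∑ j : Fin (Q.natDegree + P.natDegree), u j • colPoly P Q (j : ℕ) := by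
      rw [hA, hB, Finset.mul_sum, Finset.mul_sum,
        ← Finset.sum_filter_add_sum_filter_not Finset.univ
          (fun j : Fin (Q.natDegree + P.natDegree) => (j : ℕ) < Q.natDegree) (fun j => u j • colPoly P Q (j : ℕ))]
      congr 1
      · refine Finset.sum_congr rfl fun j hj => ?_
        rw [Finset.mem_filter] at hj
        rw [colPoly, if_pos hj.2, mul_smul_comm]
      · refine Finset.sum_congr rfl fun j hj => ?_
        rw [Finset.mem_filter] at hj
        rw [colPoly, if_neg hj.2, mul_smul_comm]
    rw [hsum]
    apply Polynomial.ext
    intro m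
    rw [Polynomial.finset_sum_coeff, Polynomial.coeff_zero]
    by_cases hm : m < Q.natDegree + P.natDegree
    · have hz := congrFun hmul ⟨m, hm⟩
      simp only [Matrix.mulVec, dotProduct, Pi.zero_apply] at hz
      rw [← hz]
      refine Finset.sum_congr rfl fun j _ => ?_
      rw [Polynomial.coeff_smul, smul_eq_mul, mul_comm]
      rfl
    · push_neg at hm
      refine Finset.sum_eq_zero fun j _ => ?_
      rw [Polynomial.coeff_smul,
        Polynomial.coeff_eq_zero_of_natDegree_lt
          (lt_of_lt_of_le (colPoly_natDegree_lt P Q j.isLt) hm), smul_zero]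
  have hdvd : Q ∣ A := by
    refine (hcop.symm).dvd_of_dvd_mul_left ⟨-B, ?_⟩
    rw [eq_neg_of_add_eq_zero_left hR, mul_neg]
  have hA0 : A = 0 := by
    rcases Nat.eq_zero_or_pos Q.natDegree with hq0 | hqpos
    · have hemp : Finset.univ.filter (fun j : Fin (Q.natDegree + P.natDegree) => (j : ℕ) < Q.natDegree) = ∅ := by
        apply Finset.filter_false_of_mem
        intro j _
        omega
      rw [hA, hemp, Finset.sum_empty]
    · by_contra hA0
      have h1 : Q.natDegree ≤ A.natDegree := Polynomial.natDegree_le_of_dvd hdvd hA0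
      have h2 : A.natDegree ≤ Q.natDegree - 1 := by
        rw [hA]
        apply Polynomial.natDegree_sum_le_of_forall_le
        intro j hj
        rw [Finset.mem_filter] at hj
        refine (Polynomial.natDegree_smul_le _ _).trans ?_
        rw [Polynomial.natDegree_X_pow]
        omega
      omega
  have hB0 : B = 0 := by
    rw [hA0, mul_zero, zero_add] at hR
    rcases mul_eq_zero.mp hR with h | h
    · exact absurd h hQ
    · exact h
  apply hu
  funext j
  by_cases hj : (j : ℕ) < Q.natDegree
  · have hcoeff : A.coeff (j : ℕ) = u j := by
      rw [hA, Polynomial.finset_sum_coeff, Finset.sum_eq_single j]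
      · rw [Polynomial.coeff_smul, Polynomial.coeff_X_pow, if_pos rfl, smul_eq_mul, mul_one]
      · intro b _ hbj
        rw [Polynomial.coeff_smul, Polynomial.coeff_X_pow, if_neg, smul_zero]
        exact fun h => hbj (Fin.val_injective h.symm)
      · intro hj'
        exact (hj' (Finset.mem_filter.mpr ⟨Finset.mem_univ j, hj⟩)).elim
    rw [hA0, Polynomial.coeff_zero] at hcoeff
    exact hcoeff.symm
  · have hcoeff : B.coeff ((j : ℕ) - Q.natDegree) = u j := by
      rw [hB, Polynomial.finset_sum_coeff, Finset.sum_eq_single j]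
      · rw [Polynomial.coeff_smul, Polynomial.coeff_X_pow, if_pos rfl, smul_eq_mul, mul_one]
      · intro b hb hbj
        have hb' := (Finset.mem_filter.mp hb).2
        rw [Polynomial.coeff_smul, Polynomial.coeff_X_pow, if_neg, smul_zero]
        intro h
        exact hbj (Fin.val_injective (by omega))
      · intro hj'
        exact (hj' (Finset.mem_filter.mpr ⟨Finset.mem_univ j, hj⟩)).elim
    rw [hB0, Polynomial.coeff_zero] at hcoeff
    exact hcoeff.symm

private lemma sum_pow_mul_syl {L : Type*} [Field L] (φ : K →+* L) (ξ : L)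
    (j : Fin (Q.natDegree + P.natDegree)) :
    ∑ i : Fin (Q.natDegree + P.natDegree), ξ ^ (i : ℕ) * φ (syl P Q i j)
      = eval₂ φ ξ (colPoly P Q (j : ℕ)) := by
  have h1 : ∑ i : Fin (Q.natDegree + P.natDegree), ξ ^ (i : ℕ) * φ (syl P Q i j)
      = ∑ i ∈ Finset.range (Q.natDegree + P.natDegree),
          ξ ^ i * φ ((colPoly P Q (j : ℕ)).coeff i) :=
    Fin.sum_univ_eq_sum_range (fun m => ξ ^ m * φ ((colPoly P Q (j : ℕ)).coeff m)) _
  rw [h1, Polynomial.eval₂_eq_sum_range' φ (colPoly_natDegree_lt P Q j.isLt) ξ]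
  exact Finset.sum_congr rfl fun i _ => mul_comm _ _

private lemma prod_ite_norm (x y : ℝ) (q p : ℕ) :
    (∏ j : Fin (q + p), (if (j : ℕ) < q then x else y)) = x ^ q * y ^ p := by
  rw [Fin.prod_univ_add]
  have h1 : ∀ i : Fin q, (if ((Fin.castAdd p i : Fin (q + p)) : ℕ) < q then x else y) = x := by
    intro i
    rw [if_pos]
    simpa using i.isLt
  have h2 : ∀ i : Fin p, (if ((Fin.natAdd q i : Fin (q + p)) : ℕ) < q then x else y) = y := by
    intro i
    rw [if_neg]
    simp
  simp only [h1, h2, Finset.prod_const, Finset.card_univ, Fintype.card_fin]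

end Sylvester

section Places

private lemma place_nat (pd : PlaceData K ι) (i : ι) (m : ℕ) :
    pd.v i (m : K) ≤ (m : ℝ) ^ (pd.e i) := by
  rcases (pd.e_nonneg i).eq_or_lt with h | h
  · have hone : ∀ k : ℕ, pd.v i (k : K) ≤ 1 := by
      intro k
      induction k with
      | zero => simp
      | succ k ih =>
        have hu := pd.ultra i h.symm (k : K) 1
        push_cast
        refine le_trans hu (max_le ih (le_of_eq (pd.v i).map_one))
    rw [← h, Real.rpow_zero]
    exact hone m
  · have := pd.arch_nat i h 1 m
    simpa using this

private lemma polyNorm_mulSupport_finite (pd : PlaceData K ι) (P : K[X]) (hP : P ≠ 0) :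
    (Function.mulSupport fun i => pd.polyNorm i P).Finite := by
  classical
  have hUfin : (⋃ m ∈ Set.Iic P.natDegree, (if P.coeff m = 0 then (∅ : Set ι)
      else Function.mulSupport fun i => pd.v i (P.coeff m))).Finite := by
    refine Set.Finite.biUnion (Set.finite_Iic _) fun m _ => ?_
    split_ifs with h
    · exact Set.finite_empty
    · exact pd.mulSupport_finite _ h
  refine hUfin.subset ?_
  intro i hi
  rw [Function.mem_mulSupport] at hi
  by_contra hiU
  apply hi
  have hv : ∀ m ≤ P.natDegree, P.coeff m ≠ 0 → pd.v i (P.coeff m) = 1 := by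
    intro m hm hc
    by_contra hne
    refine hiU (Set.mem_biUnion (Set.mem_Iic.mpr hm) ?_)
    rw [if_neg hc]
    exact Function.mem_mulSupport.mpr hne
  apply le_antisymm
  · apply Finset.sup'_le
    intro m hm
    by_cases hc : P.coeff m = 0
    · rw [hc, map_zero]; norm_num
    · rw [hv m (by rw [Finset.mem_range] at hm; omega) hc]
  · have hl : pd.v i (P.coeff P.natDegree) = 1 :=
      hv _ le_rfl (Polynomial.leadingCoeff_ne_zero.mpr hP)
    calc (1 : ℝ) = pd.v i (P.coeff P.natDegree) := hl.symm
      _ ≤ _ := Finset.le_sup' (fun m => pd.v i (P.coeff m))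
          (Finset.mem_range.mpr (Nat.lt_succ_self _))

private lemma rpow_finset_sum (x : ℝ) (hx : 0 < x) {β : Type*} (s : Finset β) (f : β → ℝ) :
    x ^ (∑ i ∈ s, f i) = ∏ i ∈ s, x ^ f i := by
  classical
  induction s using Finset.induction_on with
  | empty => simp [Real.rpow_zero]
  | insert _ _ hni ih =>
    rw [Finset.sum_insert hni, Finset.prod_insert hni, Real.rpow_add hx, ih]

end Places

section Refined

private lemma refined_core (pd : PlaceData K ι) (w : ι) {L : Type*} [Field L] (φ : K →+* L)
    (absL : AbsoluteValue L ℝ) (hcompat : ∀ x : K, absL (φ x) = pd.v w x) (ξ : L)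
    (P Q : K[X]) (hP : P ≠ 0) (hQ : Q ≠ 0)
    (r : Fin (Q.natDegree + P.natDegree))
    (hpow : ∀ k : ℕ, k < Q.natDegree + P.natDegree → absL ξ ^ k ≤ absL ξ ^ (r : ℕ))
    (hxr : 0 < absL ξ ^ (r : ℕ)) :
    pd.v w (syl P Q).det ≤ ((Q.natDegree + P.natDegree).factorial : ℝ) ^ pd.e w *
      (max (absL (eval₂ φ ξ P) / pd.polyNorm w P) (absL (eval₂ φ ξ Q) / pd.polyNorm w Q) *
        ∏ j : Fin (Q.natDegree + P.natDegree),
          (if (j : ℕ) < Q.natDegree then pd.polyNorm w P else pd.polyNorm w Q)) := by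
  classical
  set Mx := max (absL (eval₂ φ ξ P) / pd.polyNorm w P) (absL (eval₂ φ ξ Q) / pd.polyNorm w Q)
    with hMxdef
  have hPw : 0 < pd.polyNorm w P := polyNorm_pos pd w hP
  have hQw : 0 < pd.polyNorm w Q := polyNorm_pos pd w hQ
  have hMx0 : 0 ≤ Mx :=
    le_trans (div_nonneg (absL.nonneg _) hPw.le) (le_max_left _ _)
  have hnatL : ∀ m : ℕ, absL (m : L) ≤ (m : ℝ) ^ pd.e w := by
    intro m
    rw [show ((m : L)) = φ (m : K) from (map_natCast φ m).symm, hcompat]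
    exact place_nat pd w m
  set Mphi := (syl P Q).map φ with hMphi
  set cxi : Fin (Q.natDegree + P.natDegree) → L := fun i => ξ ^ (i : ℕ) with hcxi
  set T := Mphi.updateRow r (∑ k, cxi k • Mphi k) with hT
  have hdetT : T.det = cxi r • Mphi.det := by
    rw [hT]; exact Matrix.det_updateRow_sum Mphi r cxi
  have hrowT : T r = ∑ k, cxi k • Mphi k := by
    rw [hT]; exact Matrix.updateRow_self
  have hrow : ∀ j, T r j = eval₂ φ ξ (colPoly P Q (j : ℕ)) := by
    intro j
    rw [show T r j = (T r) j from rfl, hrowT, Finset.sum_apply]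
    simp only [Pi.smul_apply, smul_eq_mul]
    rw [← sum_pow_mul_syl P Q φ ξ j]
    exact Finset.sum_congr rfl fun k _ => rfl
  have hne : ∀ i j, i ≠ r → T i j = φ (syl P Q i j) := by
    intro i j h
    rw [hT, Matrix.updateRow_ne h]
    rfl
  have hevP : absL (eval₂ φ ξ P) ≤ Mx * pd.polyNorm w P := by
    have h := le_max_left (absL (eval₂ φ ξ P) / pd.polyNorm w P)
      (absL (eval₂ φ ξ Q) / pd.polyNorm w Q)
    calc absL (eval₂ φ ξ P)
        = absL (eval₂ φ ξ P) / pd.polyNorm w P * pd.polyNorm w P := by field_simp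
      _ ≤ Mx * pd.polyNorm w P := mul_le_mul_of_nonneg_right h hPw.le
  have hevQ : absL (eval₂ φ ξ Q) ≤ Mx * pd.polyNorm w Q := by
    have h := le_max_right (absL (eval₂ φ ξ P) / pd.polyNorm w P)
      (absL (eval₂ φ ξ Q) / pd.polyNorm w Q)
    calc absL (eval₂ φ ξ Q)
        = absL (eval₂ φ ξ Q) / pd.polyNorm w Q * pd.polyNorm w Q := by field_simp
      _ ≤ Mx * pd.polyNorm w Q := mul_le_mul_of_nonneg_right h hQw.le
  have hbound : ∀ i j, absL (T i j) ≤
      (if (j : ℕ) < Q.natDegree then pd.polyNorm w P else pd.polyNorm w Q) *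
        (if i = r then Mx * absL ξ ^ (r : ℕ) else 1) := by
    intro i j
    by_cases hir : i = r
    · rw [hir, if_pos rfl, hrow j, colPoly]
      split_ifs with hjq
      · rw [Polynomial.eval₂_mul, Polynomial.eval₂_X_pow, absL.map_mul, absL.map_pow]
        calc absL (eval₂ φ ξ P) * absL ξ ^ (j : ℕ)
            ≤ (Mx * pd.polyNorm w P) * absL ξ ^ (r : ℕ) :=
              mul_le_mul hevP (hpow _ j.isLt) (pow_nonneg (absL.nonneg _) _)
                (mul_nonneg hMx0 hPw.le)
          _ = pd.polyNorm w P * (Mx * absL ξ ^ (r : ℕ)) := by ring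
      · rw [Polynomial.eval₂_mul, Polynomial.eval₂_X_pow, absL.map_mul, absL.map_pow]
        calc absL (eval₂ φ ξ Q) * absL ξ ^ ((j : ℕ) - Q.natDegree)
            ≤ (Mx * pd.polyNorm w Q) * absL ξ ^ (r : ℕ) := by
              refine mul_le_mul hevQ (hpow _ (by have := j.isLt; omega))
                (pow_nonneg (absL.nonneg _) _) (mul_nonneg hMx0 hQw.le)
          _ = pd.polyNorm w Q * (Mx * absL ξ ^ (r : ℕ)) := by ring
    · rw [hne i j hir, if_neg hir, mul_one, hcompat]
      exact syl_entry_bound P Q pd w i j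
  have hdet := abv_det_le absL (pd.e_nonneg w) hnatL T r hbound
  rw [hdetT, smul_eq_mul, absL.map_mul] at hdet
  have habsM : absL Mphi.det = pd.v w (syl P Q).det := by
    rw [hMphi, show (syl P Q).map ⇑φ = φ.mapMatrix (syl P Q) from
      (RingHom.mapMatrix_apply φ _).symm, ← RingHom.map_det, hcompat]
  rw [habsM] at hdet
  have hcxiabs : absL (cxi r) = absL ξ ^ (r : ℕ) := by
    rw [hcxi]; exact absL.map_pow _ _
  rw [hcxiabs] at hdet
  rw [show ((Q.natDegree + P.natDegree).factorial : ℝ) ^ pd.e w *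
      (Mx * absL ξ ^ (r : ℕ) *
        ∏ j : Fin (Q.natDegree + P.natDegree),
          (if (j : ℕ) < Q.natDegree then pd.polyNorm w P else pd.polyNorm w Q))
      = absL ξ ^ (r : ℕ) * (((Q.natDegree + P.natDegree).factorial : ℝ) ^ pd.e w *
        (Mx * ∏ j : Fin (Q.natDegree + P.natDegree),
          (if (j : ℕ) < Q.natDegree then pd.polyNorm w P else pd.polyNorm w Q))) from by ring]
    at hdet
  exact le_of_mul_le_mul_left hdet hxr

end Refined

section Main

private lemma crude_bound (pd : PlaceData K ι) (i : ι) (P Q : K[X])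
    (hN : 0 < Q.natDegree + P.natDegree) :
    pd.v i (syl P Q).det ≤ ((Q.natDegree + P.natDegree).factorial : ℝ) ^ pd.e i *
      (pd.polyNorm i P ^ Q.natDegree * pd.polyNorm i Q ^ P.natDegree) := by
  classical
  have hA : ∀ i' j, pd.v i (syl P Q i' j) ≤
      (fun j : Fin (Q.natDegree + P.natDegree) =>
        if (j : ℕ) < Q.natDegree then pd.polyNorm i P else pd.polyNorm i Q) j *
        (if i' = (⟨0, hN⟩ : Fin (Q.natDegree + P.natDegree)) then (1 : ℝ) else 1) := by
    intro i' j
    rw [ite_self, mul_one]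
    exact syl_entry_bound P Q pd i i' j
  have h := abv_det_le (pd.v i) (pd.e_nonneg i) (place_nat pd i) (syl P Q) ⟨0, hN⟩ hA
  rw [one_mul, prod_ite_norm] at h
  exact h

/-- Brownawell's resultant inequality.  Let `K` be a number field
(axiomatized by `PlaceData`), `w` a place of `K`, `K_w` the completion at `w`
(axiomatized by a field `L` with an absolute value `absL` extending `|·|_w`), and
`ξ ∈ K_w`.  If `P, Q ∈ K[T]` are relatively prime nonzero polynomials of degree at
most `n`, then `1 ≤ (2n)! · max{|P(ξ)|_w/‖P‖_w, |Q(ξ)|_w/‖Q‖_w} · H(P)^{deg Q} · H(Q)^{deg P}`. -/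
theorem stmt4 (pd : PlaceData K ι) (w : ι)
    {L : Type*} [Field L] (φ : K →+* L) (absL : AbsoluteValue L ℝ)
    (hcompat : ∀ x : K, absL (φ x) = pd.v w x) (ξ : L)
    (n : ℕ) (P Q : K[X]) (hP : P ≠ 0) (hQ : Q ≠ 0) (hcop : IsCoprime P Q)
    (hPdeg : P.natDegree ≤ n) (hQdeg : Q.natDegree ≤ n) :
    1 ≤ ((2 * n).factorial : ℝ) *
        max (absL (Polynomial.eval₂ φ ξ P) / pd.polyNorm w P)
            (absL (Polynomial.eval₂ φ ξ Q) / pd.polyNorm w Q) *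
        pd.polyHeight P ^ Q.natDegree * pd.polyHeight Q ^ P.natDegree := by
  classical
  have hPw : 0 < pd.polyNorm w P := polyNorm_pos pd w hP
  have hQw : 0 < pd.polyNorm w Q := polyNorm_pos pd w hQ
  have hMx0 : 0 ≤ max (absL (Polynomial.eval₂ φ ξ P) / pd.polyNorm w P)
      (absL (Polynomial.eval₂ φ ξ Q) / pd.polyNorm w Q) :=
    le_trans (div_nonneg (absL.nonneg _) hPw.le) (le_max_left _ _)
  by_cases hN : 0 < Q.natDegree + P.natDegree
  · -- main case
    set R := (syl P Q).det with hRdef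
    have hRne : R ≠ 0 := syl_det_ne_zero P Q hQ hcop
    have hRfin := pd.mulSupport_finite R hRne
    have hefin : (Function.support pd.e).Finite := by
      by_contra hinf
      have h0 := finsum_of_infinite_support (f := pd.e) hinf
      rw [pd.e_sum] at h0
      exact one_ne_zero h0
    have hPfin := polyNorm_mulSupport_finite pd P hP
    have hQfin := polyNorm_mulSupport_finite pd Q hQ
    set S : Finset ι := insert w (hRfin.union (hefin.union (hPfin.union hQfin))).toFinset
      with hSdef
    have hwS : w ∈ S := Finset.mem_insert_self _ _
    have hsubR : (Function.mulSupport fun i => pd.v i R) ⊆ ↑S := fun x hx => by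
      simp only [hSdef, Finset.coe_insert, Set.mem_insert_iff, Set.Finite.coe_toFinset,
        Set.mem_union]
      tauto
    have hsubE : (Function.support pd.e) ⊆ ↑S := fun x hx => by
      simp only [hSdef, Finset.coe_insert, Set.mem_insert_iff, Set.Finite.coe_toFinset,
        Set.mem_union]
      tauto
    have hsubP : (Function.mulSupport fun i => pd.polyNorm i P) ⊆ ↑S := fun x hx => by
      simp only [hSdef, Finset.coe_insert, Set.mem_insert_iff, Set.Finite.coe_toFinset,
        Set.mem_union]
      tauto
    have hsubQ : (Function.mulSupport fun i => pd.polyNorm i Q) ⊆ ↑S := fun x hx => by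
      simp only [hSdef, Finset.coe_insert, Set.mem_insert_iff, Set.Finite.coe_toFinset,
        Set.mem_union]
      tauto
    have h1 : ∏ᶠ i, pd.v i R = ∏ i ∈ S, pd.v i R :=
      finprod_eq_prod_of_mulSupport_subset _ hsubR
    have hsum_e : ∑ i ∈ S, pd.e i = 1 := by
      rw [← pd.e_sum]
      exact (finsum_eq_sum_of_support_subset _ hsubE).symm
    have hHP : pd.polyHeight P = ∏ i ∈ S, pd.polyNorm i P :=
      finprod_eq_prod_of_mulSupport_subset _ hsubP
    have hHQ : pd.polyHeight Q = ∏ i ∈ S, pd.polyNorm i Q :=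
      finprod_eq_prod_of_mulSupport_subset _ hsubQ
    have hHP0 : 0 ≤ pd.polyHeight P := by
      rw [hHP]; exact Finset.prod_nonneg fun i _ => polyNorm_nonneg pd i P
    have hHQ0 : 0 ≤ pd.polyHeight Q := by
      rw [hHQ]; exact Finset.prod_nonneg fun i _ => polyNorm_nonneg pd i Q
    have hloc : ∀ i ∈ S, pd.v i R ≤
        ((Q.natDegree + P.natDegree).factorial : ℝ) ^ pd.e i *
          (pd.polyNorm i P ^ Q.natDegree * pd.polyNorm i Q ^ P.natDegree) *
          (if i = w then max (absL (Polynomial.eval₂ φ ξ P) / pd.polyNorm w P)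
            (absL (Polynomial.eval₂ φ ξ Q) / pd.polyNorm w Q) else 1) := by
      intro i _
      by_cases hiw : i = w
      · rw [hiw, if_pos rfl]
        rcases le_total (absL ξ) 1 with hxi | hxi
        · have h := refined_core pd w φ absL hcompat ξ P Q hP hQ ⟨0, hN⟩
            (fun k _ => by simpa using pow_le_one₀ (absL.nonneg ξ) hxi)
            (by simp)
          rw [prod_ite_norm] at h
          exact h.trans (le_of_eq (by ring))
        · have hxpos : 0 < absL ξ := lt_of_lt_of_le one_pos hxi
          have h := refined_core pd w φ absL hcompat ξ P Q hP hQ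
            ⟨Q.natDegree + P.natDegree - 1, by omega⟩
            (fun k hk => pow_le_pow_right₀ hxi (by simp; omega))
            (pow_pos hxpos _)
          rw [prod_ite_norm] at h
          exact h.trans (le_of_eq (by ring))
      · rw [if_neg hiw, mul_one]
        exact crude_bound pd i P Q hN
    have hloc' := Finset.prod_le_prod (fun i _ => (pd.v i).nonneg R) hloc
    have hfact_pos : (0 : ℝ) < ((Q.natDegree + P.natDegree).factorial : ℝ) := by
      exact_mod_cast Nat.factorial_pos _
    have hsplit : (∏ i ∈ S, (((Q.natDegree + P.natDegree).factorial : ℝ) ^ pd.e i *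
          (pd.polyNorm i P ^ Q.natDegree * pd.polyNorm i Q ^ P.natDegree) *
          (if i = w then max (absL (Polynomial.eval₂ φ ξ P) / pd.polyNorm w P)
            (absL (Polynomial.eval₂ φ ξ Q) / pd.polyNorm w Q) else 1)))
        = ((Q.natDegree + P.natDegree).factorial : ℝ) *
          (pd.polyHeight P ^ Q.natDegree * pd.polyHeight Q ^ P.natDegree) *
          max (absL (Polynomial.eval₂ φ ξ P) / pd.polyNorm w P)
            (absL (Polynomial.eval₂ φ ξ Q) / pd.polyNorm w Q) := by
      rw [Finset.prod_mul_distrib, Finset.prod_mul_distrib, Finset.prod_mul_distrib,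
        Finset.prod_ite_eq' S w, if_pos hwS,
        ← rpow_finset_sum _ hfact_pos S pd.e, hsum_e, Real.rpow_one,
        Finset.prod_pow, Finset.prod_pow, ← hHP, ← hHQ]
    have hchain : (1 : ℝ) ≤ ((Q.natDegree + P.natDegree).factorial : ℝ) *
        (pd.polyHeight P ^ Q.natDegree * pd.polyHeight Q ^ P.natDegree) *
        max (absL (Polynomial.eval₂ φ ξ P) / pd.polyNorm w P)
          (absL (Polynomial.eval₂ φ ξ Q) / pd.polyNorm w Q) := by
      calc (1 : ℝ) = ∏ᶠ i, pd.v i R := (pd.product_formula R hRne).symm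
        _ = ∏ i ∈ S, pd.v i R := h1
        _ ≤ _ := hloc'
        _ = _ := hsplit
    calc (1 : ℝ) ≤ ((Q.natDegree + P.natDegree).factorial : ℝ) *
          (pd.polyHeight P ^ Q.natDegree * pd.polyHeight Q ^ P.natDegree) *
          max (absL (Polynomial.eval₂ φ ξ P) / pd.polyNorm w P)
            (absL (Polynomial.eval₂ φ ξ Q) / pd.polyNorm w Q) := hchain
      _ ≤ (((2 * n).factorial : ℕ) : ℝ) *
          (pd.polyHeight P ^ Q.natDegree * pd.polyHeight Q ^ P.natDegree) *
          max (absL (Polynomial.eval₂ φ ξ P) / pd.polyNorm w P)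
            (absL (Polynomial.eval₂ φ ξ Q) / pd.polyNorm w Q) := by
          refine mul_le_mul_of_nonneg_right (mul_le_mul_of_nonneg_right ?_ ?_) hMx0
          · exact_mod_cast Nat.factorial_le (by omega)
          · exact mul_nonneg (pow_nonneg hHP0 _) (pow_nonneg hHQ0 _)
      _ = ((2 * n).factorial : ℝ) *
          max (absL (Polynomial.eval₂ φ ξ P) / pd.polyNorm w P)
            (absL (Polynomial.eval₂ φ ξ Q) / pd.polyNorm w Q) *
          pd.polyHeight P ^ Q.natDegree * pd.polyHeight Q ^ P.natDegree := by ring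
  · -- degenerate case: both constants
    push_neg at hN
    have hq0 : Q.natDegree = 0 := by omega
    have hp0 : P.natDegree = 0 := by omega
    have hPc : P.coeff 0 ≠ 0 := by
      intro h
      apply hP
      rw [Polynomial.eq_C_of_natDegree_eq_zero hp0, h]
      exact Polynomial.C_0
    have hQc : Q.coeff 0 ≠ 0 := by
      intro h
      apply hQ
      rw [Polynomial.eq_C_of_natDegree_eq_zero hq0, h]
      exact Polynomial.C_0
    have hevP : Polynomial.eval₂ φ ξ P = φ (P.coeff 0) := by
      conv_lhs => rw [Polynomial.eq_C_of_natDegree_eq_zero hp0]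
      exact Polynomial.eval₂_C _ _
    have hevQ : Polynomial.eval₂ φ ξ Q = φ (Q.coeff 0) := by
      conv_lhs => rw [Polynomial.eq_C_of_natDegree_eq_zero hq0]
      exact Polynomial.eval₂_C _ _
    have hPC : pd.polyNorm w P = pd.v w (P.coeff 0) := by
      rw [PlaceData.polyNorm]
      simp [hp0]
    have hQC : pd.polyNorm w Q = pd.v w (Q.coeff 0) := by
      rw [PlaceData.polyNorm]
      simp [hq0]
    have hr1 : absL (Polynomial.eval₂ φ ξ P) / pd.polyNorm w P = 1 := by
      rw [hevP, hcompat, hPC, div_self (ne_of_gt ((pd.v w).pos hPc))]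
    have hr2 : absL (Polynomial.eval₂ φ ξ Q) / pd.polyNorm w Q = 1 := by
      rw [hevQ, hcompat, hQC, div_self (ne_of_gt ((pd.v w).pos hQc))]
    rw [hq0, hp0, pow_zero, pow_zero, mul_one, mul_one, hr1, hr2, max_self, mul_one]
    exact_mod_cast Nat.one_le_iff_ne_zero.mpr (Nat.factorial_ne_zero _)

end Main
end

section
/- Let k ≥ 1 and ℓ ≥ 0 be integers and let P ∈ K[T] be a polynomial of degree at most ℓ over a number field K. Then c^{-1} H(P)^k ≤ H(P·E_{k-1}) ≤ c H(P)^k, where c > 0 depends only on k and ℓ, E_{k-1} is the space of polynomials of degree ≤ k−1, P·E_{k-1} is the subspace {PQ : deg Q ≤ k−1} of polynomials of degree ≤ k+ℓ−1, and H(V) denotes the height of a subspace V (the height of its Plücker coordinates). -/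
open MvPolynomial Finset

namespace Stmt6Aux

noncomputable section

abbrev AA := MvPolynomial ℕ ℤ
abbrev BB (k : ℕ) := MvPolynomial (Fin k) AA

variable (k ℓ : ℕ)

def G : BB k := ∏ i : Fin k, ∑ t ∈ Finset.range (ℓ+1), C (X t : AA) * (X i : BB k) ^ t

def Mu : Matrix (Fin k) (Fin (k+ℓ)) AA :=
  Matrix.of fun i j =>
    if (i : ℕ) ≤ (j : ℕ) ∧ (j : ℕ) ≤ ℓ + (i : ℕ) then (X ((j : ℕ) - (i : ℕ)) : AA) else 0

def mino (c : Fin k → Fin (k+ℓ)) : AA := ((Mu k ℓ).submatrix id c).det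

/-- product of powers of variables as a monomial -/
lemma prod_X_pow (d : Fin k → ℕ) :
    (∏ j : Fin k, (X j : BB k) ^ d j) = monomial (Finsupp.equivFunOnFinite.symm d) 1 := by
  rw [monomial_eq, C_1, one_mul, Finsupp.prod_pow]
  simp

lemma prod_ite_zero {α M : Type*} [CommMonoidWithZero M] (s : Finset α) (p : α → Prop)
    [DecidablePred p] (f : α → M) :
    (∏ a ∈ s, if p a then f a else 0) = if ∀ a ∈ s, p a then ∏ a ∈ s, f a else 0 := by
  by_cases h : ∀ a ∈ s, p a
  · rw [if_pos h]; exact Finset.prod_congr rfl fun a ha => if_pos (h a ha)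
  · rw [if_neg h]
    push_neg at h
    obtain ⟨a, ha, hpa⟩ := h
    exact Finset.prod_eq_zero ha (if_neg hpa)

lemma coeff_G (γ : Fin k →₀ ℕ) :
    MvPolynomial.coeff γ (G k ℓ) =
      if ∀ i, γ i ≤ ℓ then ∏ i : Fin k, (X (γ i) : AA) else 0 := by
  classical
  rw [G, Finset.prod_univ_sum]
  have h1 : ∀ d : Fin k → ℕ,
      (∏ i : Fin k, C (X (d i) : AA) * (X i : BB k) ^ d i)
        = monomial (Finsupp.equivFunOnFinite.symm d) (∏ i : Fin k, (X (d i) : AA)) := by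
    intro d
    rw [Finset.prod_mul_distrib, ← map_prod, prod_X_pow, C_mul_monomial, mul_one]
  rw [Finset.sum_congr rfl fun d _ => h1 d]
  rw [MvPolynomial.coeff_sum]
  have h2 : ∀ d ∈ Fintype.piFinset (fun _ : Fin k => Finset.range (ℓ+1)),
      coeff γ (monomial (Finsupp.equivFunOnFinite.symm d) (∏ i : Fin k, (X (d i) : AA)))
        = if d = ⇑γ then ∏ i : Fin k, (X (d i) : AA) else 0 := by
    intro d _
    rw [coeff_monomial]
    congr 1
    simp only [eq_iff_iff]
    constructor
    · intro h; have := congrArg (⇑Finsupp.equivFunOnFinite) h; simp at this; exact this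
    · intro h; subst h; simp
  rw [Finset.sum_congr rfl h2, Finset.sum_ite_eq' (Fintype.piFinset fun _ => Finset.range (ℓ+1)) (⇑γ)]
  congr 1
  · simp only [eq_iff_iff, Fintype.mem_piFinset, Finset.mem_range, Nat.lt_succ_iff]

def spanCoeffs (p : BB k) : Submodule ℤ AA :=
  Submodule.span ℤ (Set.range fun γ : Fin k →₀ ℕ => MvPolynomial.coeff γ p)

lemma coeff_mem_spanCoeffs (p : BB k) (γ : Fin k →₀ ℕ) : coeff γ p ∈ spanCoeffs k p :=
  Submodule.subset_span ⟨γ, rfl⟩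

lemma spanCoeffs_mul_sub_le (p : BB k) (a b : Fin k) (hab : a ≠ b) :
    spanCoeffs k p ≤ spanCoeffs k ((X b - X a) * p) := by
  classical
  set q : BB k := (X b - X a) * p with hq
  have key : ∀ t : ℕ, ∀ γ : Fin k →₀ ℕ, p.degreeOf b < γ b + t →
      coeff γ p ∈ spanCoeffs k q := by
    intro t
    induction t with
    | zero =>
      intro γ hγ
      have h0 : coeff γ p = 0 := by
        by_contra hne
        have hmem : γ ∈ p.support := mem_support_iff.2 hne
        have : γ b ≤ p.degreeOf b := by
          rw [MvPolynomial.degreeOf_eq_sup]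
          exact Finset.le_sup (f := fun m : Fin k →₀ ℕ => m b) hmem
        omega
      rw [h0]; exact Submodule.zero_mem _
    | succ t ih =>
      intro γ hγ
      set δ : Fin k →₀ ℕ := γ + Finsupp.single b 1 with hδ
      have h1 : coeff δ (X b * p) = coeff γ p := by
        rw [hδ, add_comm γ (Finsupp.single b 1), MvPolynomial.coeff_X_mul]
      have h2 : coeff δ q = coeff γ p - coeff δ (X a * p) := by
        rw [hq, sub_mul, MvPolynomial.coeff_sub, h1]
      have h3 : coeff γ p = coeff δ q + coeff δ (X a * p) := by rw [h2]; ring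
      rw [h3]
      refine Submodule.add_mem _ (coeff_mem_spanCoeffs k q δ) ?_
      rw [MvPolynomial.coeff_X_mul']
      set γ' : Fin k →₀ ℕ := δ - Finsupp.single a 1 with hγ'
      split
      · apply ih
        have : γ' b = γ b + 1 := by
          rw [hγ', Finsupp.tsub_apply, hδ, Finsupp.add_apply, Finsupp.single_apply,
            Finsupp.single_apply]
          rw [if_pos rfl, if_neg hab]; omega
        omega
      · exact Submodule.zero_mem _
  intro x hx
  refine Submodule.span_induction ?_ (Submodule.zero_mem _)
    (fun y z _ _ hy hz => Submodule.add_mem _ hy hz)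
    (fun n y _ hy => Submodule.smul_mem _ n hy) hx
  rintro y ⟨γ, rfl⟩
  exact key (p.degreeOf b + 1) γ (by omega)

lemma spanCoeffs_prod_mul_le {α : Type*} (s : Finset α) (f g : α → Fin k)
    (hfg : ∀ x ∈ s, f x ≠ g x) (p : BB k) :
    spanCoeffs k p ≤ spanCoeffs k ((∏ x ∈ s, ((X (g x) : BB k) - X (f x))) * p) := by
  classical
  induction s using Finset.induction_on with
  | empty => simp
  | @insert a s ha ih =>
    rw [Finset.prod_insert ha, mul_assoc]
    refine le_trans (ih fun x hx => hfg x (Finset.mem_insert_of_mem hx)) ?_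
    exact spanCoeffs_mul_sub_le k _ _ _ (hfg a (Finset.mem_insert_self a s))

lemma vand_eq :
    (Matrix.vandermonde fun i : Fin k => (X i : BB k)).det
      = ∏ x ∈ (univ : Finset (Fin k)).sigma (fun i => Finset.Ioi i),
          ((X x.2 : BB k) - X x.1) := by
  rw [Matrix.det_vandermonde]
  exact (Finset.prod_sigma (univ : Finset (Fin k)) (fun i => Finset.Ioi i)
    (fun x => (X x.2 : BB k) - X x.1)).symm

def Delta : BB k :=
  ∏ x ∈ (univ : Finset (Fin k)).sigma (fun i => Finset.Ioi i), ((X x.2 : BB k) - X x.1)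

lemma spanCoeffs_G_le :
    spanCoeffs k (G k ℓ) ≤ spanCoeffs k (Delta k * G k ℓ) :=
  spanCoeffs_prod_mul_le k ((univ : Finset (Fin k)).sigma fun i => Finset.Ioi i)
    (fun x => x.1) (fun x => x.2)
    (fun x hx => ne_of_lt (Finset.mem_Ioi.1 (Finset.mem_sigma.1 hx).2)) (G k ℓ)

def eσ (σ : Equiv.Perm (Fin k)) : Fin k →₀ ℕ :=
  Finsupp.equivFunOnFinite.symm fun j => ((σ.symm j : Fin k) : ℕ)

lemma Delta_eq_sum : Delta k = ∑ σ : Equiv.Perm (Fin k),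
    (Equiv.Perm.sign σ : ℤ) • monomial (eσ k σ) (1 : AA) := by
  classical
  rw [show Delta k = (Matrix.vandermonde fun i : Fin k => (X i : BB k)).det from
    (vand_eq k).symm, Matrix.det_apply']
  refine Finset.sum_congr rfl fun σ _ => ?_
  have h1 : ∀ i : Fin k, Matrix.vandermonde (fun i : Fin k => (X i : BB k)) (σ i) i
      = (fun j : Fin k => (X j : BB k) ^ ((σ.symm j : Fin k) : ℕ)) (σ i) := by
    intro i; simp [Matrix.vandermonde]
  rw [Finset.prod_congr rfl fun i _ => h1 i, Equiv.prod_comp σ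
    (fun j : Fin k => (X j : BB k) ^ ((σ.symm j : Fin k) : ℕ)), prod_X_pow]
  rw [zsmul_eq_mul]
  rfl

def BM (γ : Fin k →₀ ℕ) : Matrix (Fin k) (Fin k) AA :=
  Matrix.of fun r s =>
    if (s : ℕ) ≤ γ r ∧ γ r ≤ ℓ + (s : ℕ) then (X (γ r - (s : ℕ)) : AA) else 0

lemma coeff_DeltaG (γ : Fin k →₀ ℕ) :
    coeff γ (Delta k * G k ℓ) = (BM k ℓ γ).det := by
  classical
  rw [Delta_eq_sum, Finset.sum_mul, MvPolynomial.coeff_sum, Matrix.det_apply']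
  refine Finset.sum_congr rfl fun σ _ => ?_
  set mid : AA := if (∀ j : Fin k, ((σ.symm j : Fin k) : ℕ) ≤ γ j ∧
      γ j ≤ ℓ + ((σ.symm j : Fin k) : ℕ))
      then ∏ j : Fin k, (X (γ j - ((σ.symm j : Fin k) : ℕ)) : AA) else 0 with hmid
  have hL : coeff γ ((Equiv.Perm.sign σ : ℤ) • monomial (eσ k σ) (1 : AA) * G k ℓ)
      = (Equiv.Perm.sign σ : ℤ) • mid := by
    rw [smul_mul_assoc, MvPolynomial.coeff_smul]
    congr 1
    rw [MvPolynomial.coeff_monomial_mul']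
    have happ : ∀ j, eσ k σ j = ((σ.symm j : Fin k) : ℕ) := fun j => rfl
    have hsub : ∀ j, (γ - eσ k σ) j = γ j - ((σ.symm j : Fin k) : ℕ) := by
      intro j; rw [Finsupp.tsub_apply, happ]
    by_cases hle : eσ k σ ≤ γ
    · rw [if_pos hle, one_mul, coeff_G]
      have hle' : ∀ j, ((σ.symm j : Fin k) : ℕ) ≤ γ j := fun j => happ j ▸ Finsupp.le_def.1 hle j
      by_cases h2 : ∀ j : Fin k, (γ - eσ k σ) j ≤ ℓ
      · rw [if_pos h2, hmid,
          if_pos fun j => ⟨hle' j, by have := h2 j; rw [hsub] at this; omega⟩]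
        exact Finset.prod_congr rfl fun j _ => by rw [hsub]
      · rw [if_neg h2, hmid,
          if_neg fun hall => h2 fun j => by rw [hsub]; have := (hall j).2; omega]
    · rw [if_neg hle, hmid,
        if_neg fun hall => hle (Finsupp.le_def.2 fun j => (happ j).symm ▸ (hall j).1)]
  rw [hL, zsmul_eq_mul]
  congr 1
  have h4 : ∀ i : Fin k, BM k ℓ γ (σ i) i
      = (fun x => BM k ℓ γ x ((σ.symm x : Fin k))) (σ i) := by
    intro i; simp
  rw [Finset.prod_congr rfl fun i _ => h4 i,
    Equiv.prod_comp σ (fun x => BM k ℓ γ x (σ.symm x))]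
  have h5 : ∀ j : Fin k, BM k ℓ γ j (σ.symm j)
      = if ((σ.symm j : Fin k) : ℕ) ≤ γ j ∧ γ j ≤ ℓ + ((σ.symm j : Fin k) : ℕ)
        then (X (γ j - ((σ.symm j : Fin k) : ℕ)) : AA) else 0 := fun j => rfl
  rw [Finset.prod_congr rfl fun j _ => h5 j, prod_ite_zero, hmid]
  simp only [Finset.mem_univ, forall_true_left]

lemma coeff_DeltaG_mem (γ : Fin k →₀ ℕ) :
    coeff γ (Delta k * G k ℓ) ∈ Submodule.span ℤ (Set.range (mino k ℓ)) := by
  classical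
  rw [coeff_DeltaG]
  by_cases hbig : ∀ r : Fin k, γ r < k + ℓ
  · have hBM : BM k ℓ γ
        = Matrix.transpose ((Mu k ℓ).submatrix id fun r => (⟨γ r, hbig r⟩ : Fin (k+ℓ))) := by
      ext r s
      simp only [BM, Mu, Matrix.transpose_apply, Matrix.submatrix_apply, Matrix.of_apply, id]
    rw [hBM, Matrix.det_transpose]
    exact Submodule.subset_span ⟨_, rfl⟩
  · push_neg at hbig
    obtain ⟨r, hr⟩ := hbig
    have hrow : ∀ s : Fin k, BM k ℓ γ r s = 0 := by
      intro s
      have hs : (s : ℕ) < k := s.isLt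
      have : ¬ ((s : ℕ) ≤ γ r ∧ γ r ≤ ℓ + (s : ℕ)) := by omega
      simp only [BM, Matrix.of_apply, if_neg this]
    rw [Matrix.det_eq_zero_of_row_eq_zero r hrow]
    exact Submodule.zero_mem _

lemma exists_intComb (m : ℕ) (hm : m ≤ ℓ) :
    ∃ n : (Fin k → Fin (k+ℓ)) → ℤ, ∑ c, n c • mino k ℓ c = (X m : AA) ^ k := by
  classical
  have h1 : ((X m : AA) ^ k) ∈ spanCoeffs k (G k ℓ) := by
    have h := coeff_G k ℓ (Finsupp.equivFunOnFinite.symm fun _ : Fin k => m)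
    rw [if_pos (fun i => by simp [hm])] at h
    have h2 : (∏ i : Fin k, (X ((Finsupp.equivFunOnFinite.symm fun _ : Fin k => m) i) : AA))
        = (X m : AA) ^ k := by
      simp [Finset.prod_const]
    rw [h2] at h
    exact h ▸ coeff_mem_spanCoeffs k (G k ℓ) _
  have h3 : spanCoeffs k (Delta k * G k ℓ) ≤ Submodule.span ℤ (Set.range (mino k ℓ)) := by
    refine Submodule.span_le.2 ?_
    rintro _ ⟨γ, rfl⟩
    exact coeff_DeltaG_mem k ℓ γ
  exact (Submodule.mem_span_range_iff_exists_fun ℤ).1 (h3 (spanCoeffs_G_le k ℓ h1))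

end

end Stmt6Aux



open Polynomial Finset

variable {K : Type*} [Field K] {ι : Type*}

/-- The height of the subspace `P·E_{k-1} = {PQ : deg Q ≤ k-1}` of `E_{k+ℓ-1}`:
the height of the vector of `k×k` minors (Plücker coordinates) of the `k×(k+ℓ)`
matrix whose rows are the shifted coefficient vectors of `P`. -/
noncomputable def mulSubspaceHeight (pd : PlaceData K ι) (k ℓ : ℕ) (P : K[X]) : ℝ :=
  letI R : Matrix (Fin k) (Fin (k + ℓ)) K := fun i j =>
    if (i : ℕ) ≤ (j : ℕ) ∧ (j : ℕ) ≤ ℓ + (i : ℕ) then P.coeff ((j : ℕ) - (i : ℕ)) else 0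
  ∏ᶠ i : ι,
    ((Finset.univ : Finset (Fin k → Fin (k + ℓ))).sup
      fun c => Real.toNNReal (pd.v i ((R.submatrix id c).det)) : NNReal)


namespace Stmt6Aux

variable {K : Type*} [Field K] {ι : Type*}

/-- the banded matrix of shifted coefficient vectors of `P` -/
noncomputable def Rmat (k ℓ : ℕ) (P : K[X]) : Matrix (Fin k) (Fin (k + ℓ)) K :=
  fun i j =>
    if (i : ℕ) ≤ (j : ℕ) ∧ (j : ℕ) ≤ ℓ + (i : ℕ) then P.coeff ((j : ℕ) - (i : ℕ)) else 0

noncomputable def SRn (pd : PlaceData K ι) (i : ι) (k ℓ : ℕ) (P : K[X]) : NNReal :=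
  (Finset.univ : Finset (Fin k → Fin (k + ℓ))).sup
    fun c => Real.toNNReal (pd.v i (((Rmat k ℓ P).submatrix id c).det))

lemma mulSubspaceHeight_eq (pd : PlaceData K ι) (k ℓ : ℕ) (P : K[X]) :
    mulSubspaceHeight pd k ℓ P = ∏ᶠ i : ι, ((SRn pd i k ℓ P : NNReal) : ℝ) := rfl

lemma aux_nat_mul_le (pd : PlaceData K ι) (i : ι) (x : K) (n : ℕ) :
    pd.v i ((n : K) * x) ≤ (n : ℝ) ^ (pd.e i) * pd.v i x := by
  rcases (pd.e_nonneg i).eq_or_lt with h0 | hpos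
  · rw [← h0, Real.rpow_zero, one_mul]
    induction n with
    | zero => simpa using (pd.v i).nonneg x
    | succ n ih =>
      have h : ((n + 1 : ℕ) : K) * x = (n : K) * x + x := by push_cast; ring
      rw [h]
      exact le_trans (pd.ultra i h0.symm _ _) (max_le ih le_rfl)
  · exact pd.arch_nat i hpos x n

lemma almost_ultra (pd : PlaceData K ι) (i : ι) (x y : K) :
    pd.v i (x + y) ≤ (2 : ℝ) ^ (pd.e i) * max (pd.v i x) (pd.v i y) := by
  rcases (pd.e_nonneg i).eq_or_lt with h0 | hpos
  · rw [← h0, Real.rpow_zero, one_mul]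
    exact pd.ultra i h0.symm x y
  set v := pd.v i
  set E := pd.e i
  set M := max (v x) (v y) with hM
  have hM0 : 0 ≤ M := le_max_of_le_left (v.nonneg x)
  set R := (2 : ℝ) ^ E * M with hR
  have hR0 : 0 ≤ R := mul_nonneg (Real.rpow_nonneg (by norm_num) _) hM0
  by_contra hcon
  push_neg at hcon
  have key : ∀ n : ℕ, v (x + y) ^ n ≤ (n + 1 : ℝ) * R ^ n := by
    intro n
    have h1 : v (x + y) ^ n = v ((x + y) ^ n) := (map_pow v _ n).symm
    rw [h1, add_pow]
    refine le_trans (v.sum_le _ _) ?_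
    have hterm : ∀ j ∈ Finset.range (n + 1),
        v (x ^ j * y ^ (n - j) * (n.choose j : K)) ≤ (2 : ℝ) ^ ((n : ℝ) * E) * M ^ n := by
      intro j hj
      have hj' : j ≤ n := Nat.lt_succ_iff.1 (Finset.mem_range.1 hj)
      rw [mul_comm (x ^ j * y ^ (n - j)) ((n.choose j : K))]
      refine le_trans (aux_nat_mul_le pd i _ (n.choose j)) ?_
      have hc : ((n.choose j : ℕ) : ℝ) ≤ (2 : ℝ) ^ (n : ℕ) := by
        have h2 : n.choose j ≤ 2 ^ n := by
          calc n.choose j ≤ ∑ t ∈ Finset.range (n + 1), n.choose t :=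
            Finset.single_le_sum (fun t _ => Nat.zero_le _) hj
          _ = 2 ^ n := Nat.sum_range_choose n
        exact_mod_cast h2
      have hv : v (x ^ j * y ^ (n - j)) ≤ M ^ n := by
        rw [v.map_mul, map_pow, map_pow]
        calc v x ^ j * v y ^ (n - j) ≤ M ^ j * M ^ (n - j) := by
              refine mul_le_mul (pow_le_pow_left₀ (v.nonneg x) (le_max_left _ _) j)
                (pow_le_pow_left₀ (v.nonneg y) (le_max_right _ _) (n - j))
                (pow_nonneg (v.nonneg y) _) (pow_nonneg hM0 _)
          _ = M ^ n := by rw [← pow_add]; congr 1; omega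
      have hcE : ((n.choose j : ℕ) : ℝ) ^ E ≤ (2 : ℝ) ^ ((n : ℝ) * E) := by
        have h3 : ((2 : ℝ) ^ (n : ℕ)) ^ E = (2 : ℝ) ^ ((n : ℝ) * E) := by
          rw [← Real.rpow_natCast 2 n, ← Real.rpow_mul (by norm_num)]
        rw [← h3]
        exact Real.rpow_le_rpow (Nat.cast_nonneg _) hc (le_of_lt hpos)
      exact mul_le_mul hcE hv (v.nonneg _) (Real.rpow_nonneg (by norm_num) _)
    refine le_trans (Finset.sum_le_sum hterm) ?_
    rw [Finset.sum_const, Finset.card_range, nsmul_eq_mul]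
    have h4 : R ^ n = (2 : ℝ) ^ ((n : ℝ) * E) * M ^ n := by
      rw [hR, mul_pow, ← Real.rpow_natCast ((2:ℝ) ^ E) n, ← Real.rpow_mul (by norm_num)]
      ring_nf
    rw [h4]
    push_cast
    exact le_rfl
  rcases hR0.eq_or_lt with hReq | hRpos
  · have h1 := key 1
    rw [pow_one, pow_one] at h1
    have h2 : (0:ℝ) < v (x + y) := lt_of_le_of_lt hR0 hcon
    rw [← hReq] at h1
    norm_num at h1
    rw [h1, map_zero] at h2; exact lt_irrefl _ h2
  · set W := v (x + y) with hW
    set d : ℝ := W / R - 1 with hd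
    have hd0 : 0 < d := by
      have : 1 < W / R := (one_lt_div hRpos).2 hcon
      simp only [hd]; linarith
    obtain ⟨mq, hmq⟩ := exists_nat_gt (max 1 (4 / d ^ 2))
    have hm1 : (1 : ℝ) ≤ (mq : ℝ) := le_of_lt (lt_of_le_of_lt (le_max_left _ _) hmq)
    have hm2 : 4 / d ^ 2 < (mq : ℝ) := lt_of_le_of_lt (le_max_right _ _) hmq
    have hmd : 4 ≤ (mq : ℝ) * d ^ 2 := by
      rw [div_lt_iff₀ (by positivity)] at hm2
      nlinarith
    have hkey := key (2 * mq)
    have hratio : (W / R) ^ (2 * mq) ≤ 2 * (mq : ℝ) + 1 := by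
      rw [div_pow, div_le_iff₀ (pow_pos hRpos _)]
      refine le_trans hkey (le_of_eq ?_)
      push_cast
      ring
    have hWR : W / R = 1 + d := by rw [hd]; ring
    have hbern : (1 + (mq : ℝ) * d) ≤ (W / R) ^ mq := by
      rw [hWR]
      exact one_add_mul_le_pow (by linarith) mq
    have hsq : ((1 + (mq : ℝ) * d)) ^ 2 ≤ (W / R) ^ (2 * mq) := by
      rw [mul_comm 2 mq, pow_mul]
      refine pow_le_pow_left₀ (by nlinarith) hbern 2
    have hA : 4 * (mq : ℝ) ≤ (mq : ℝ) * ((mq : ℝ) * d ^ 2) := by nlinarith [hm1, hmd]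
    have hB : (mq : ℝ) * ((mq : ℝ) * d ^ 2) ≤ (1 + (mq : ℝ) * d) ^ 2 := by
      nlinarith [hd0, hm1]
    clear_value d W R M
    linarith [hsq, hratio, hA, hB, hm1]

lemma one_le_rpow2 (y : ℝ) (hy : 0 ≤ y) : 1 ≤ (2 : ℝ) ^ y := by
  have := Real.rpow_le_rpow_of_exponent_le (by norm_num : (1:ℝ) ≤ 2) hy
  rwa [Real.rpow_zero] at this

lemma rpow_nat_mul (T : ℕ) (E : ℝ) : (2:ℝ) ^ ((T : ℝ) * E) = ((2:ℝ) ^ T) ^ E := by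
  rw [← Real.rpow_natCast 2 T, ← Real.rpow_mul (by norm_num)]

lemma v_sum_le (pd : PlaceData K ι) (i : ι) {α : Type*} (s : Finset α) (f : α → K)
    (M : ℝ) (hM : 0 ≤ M) (h : ∀ a ∈ s, pd.v i (f a) ≤ M) :
    pd.v i (∑ a ∈ s, f a) ≤ (2 : ℝ) ^ ((s.card : ℝ) * pd.e i) * M := by
  induction s using Finset.cons_induction with
  | empty => simpa using hM
  | cons a s ha ih =>
    rw [Finset.sum_cons]
    refine le_trans (almost_ultra pd i _ _) ?_
    have h1 : pd.v i (f a) ≤ (2:ℝ) ^ ((s.card : ℝ) * pd.e i) * M := by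
      refine le_trans (h a (Finset.mem_cons_self a s)) ?_
      nth_rewrite 1 [← one_mul M]
      exact mul_le_mul_of_nonneg_right
        (one_le_rpow2 _ (mul_nonneg (Nat.cast_nonneg _) (pd.e_nonneg i))) hM
    have h2 := ih fun b hb => h b (Finset.mem_cons_of_mem hb)
    have h3 : max (pd.v i (f a)) (pd.v i (∑ b ∈ s, f b))
        ≤ (2:ℝ) ^ ((s.card : ℝ) * pd.e i) * M := max_le h1 h2
    refine le_trans (mul_le_mul_of_nonneg_left h3 (Real.rpow_nonneg (by norm_num) _))
      (le_of_eq ?_)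
    rw [← mul_assoc, ← Real.rpow_add (by norm_num : (0:ℝ) < 2), Finset.card_cons]
    congr 1
    push_cast
    ring

lemma polyNorm_nonneg (pd : PlaceData K ι) (i : ι) (P : K[X]) : 0 ≤ pd.polyNorm i P :=
  le_trans ((pd.v i).nonneg (P.coeff 0))
    (Finset.le_sup' (fun m => pd.v i (P.coeff m)) (Finset.mem_range.2 (Nat.succ_pos _)))

lemma coeff_le_polyNorm (pd : PlaceData K ι) (i : ι) (P : K[X]) (m : ℕ) :
    pd.v i (P.coeff m) ≤ pd.polyNorm i P := by
  by_cases h : m ≤ P.natDegree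
  · exact Finset.le_sup' (fun m => pd.v i (P.coeff m)) (Finset.mem_range.2 (Nat.lt_succ_of_le h))
  · rw [Polynomial.coeff_eq_zero_of_natDegree_lt (lt_of_not_ge h), map_zero]
    exact polyNorm_nonneg pd i P

lemma polyNorm_pos (pd : PlaceData K ι) (i : ι) {P : K[X]} (hP : P ≠ 0) :
    0 < pd.polyNorm i P := by
  have h1 : P.coeff P.natDegree ≠ 0 := by
    rw [← Polynomial.leadingCoeff]
    exact Polynomial.leadingCoeff_ne_zero.2 hP
  exact lt_of_lt_of_le ((pd.v i).pos h1)
    (Finset.le_sup' (fun m => pd.v i (P.coeff m)) (Finset.mem_range.2 (Nat.lt_succ_self _)))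

lemma entry_le (pd : PlaceData K ι) (i : ι) (k ℓ : ℕ) (P : K[X])
    (r : Fin k) (j : Fin (k+ℓ)) : pd.v i (Rmat k ℓ P r j) ≤ pd.polyNorm i P := by
  simp only [Rmat]
  split
  · exact coeff_le_polyNorm pd i P _
  · rw [map_zero]; exact polyNorm_nonneg pd i P

lemma local_upper (pd : PlaceData K ι) (i : ι) (k ℓ : ℕ) (P : K[X])
    (c : Fin k → Fin (k+ℓ)) :
    pd.v i (((Rmat k ℓ P).submatrix id c).det)
      ≤ ((2:ℝ) ^ k.factorial) ^ pd.e i * pd.polyNorm i P ^ k := by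
  set N := pd.polyNorm i P with hN
  have hN0 : 0 ≤ N := polyNorm_nonneg pd i P
  rw [Matrix.det_apply']
  have hterm : ∀ σ ∈ (Finset.univ : Finset (Equiv.Perm (Fin k))),
      pd.v i ((↑↑(Equiv.Perm.sign σ) : K) * ∏ j, (Rmat k ℓ P).submatrix id c (σ j) j)
        ≤ N ^ k := by
    intro σ _
    have hsgn : pd.v i ((↑↑(Equiv.Perm.sign σ) : K)) = 1 := by
      rcases Int.units_eq_one_or (Equiv.Perm.sign σ) with h | h <;> rw [h] <;> simp
    rw [(pd.v i).map_mul, hsgn, one_mul, map_prod]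
    calc (∏ j, pd.v i ((Rmat k ℓ P).submatrix id c (σ j) j))
        ≤ ∏ _j : Fin k, N := Finset.prod_le_prod (fun j _ => (pd.v i).nonneg _)
          (fun j _ => entry_le pd i k ℓ P _ _)
      _ = N ^ k := by rw [Finset.prod_const, Finset.card_univ, Fintype.card_fin]
  refine le_trans (v_sum_le pd i Finset.univ _ (N ^ k) (pow_nonneg hN0 k) hterm)
    (le_of_eq ?_)
  congr 1
  rw [Finset.card_univ, Fintype.card_perm, Fintype.card_fin, rpow_nat_mul]

lemma spec_sum (k ℓ m : ℕ) (n : (Fin k → Fin (k+ℓ)) → ℤ)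
    (hn : ∑ c, n c • Stmt6Aux.mino k ℓ c = (MvPolynomial.X m : Stmt6Aux.AA) ^ k)
    (P : K[X]) :
    ∑ c, n c • ((Rmat k ℓ P).submatrix id c).det = P.coeff m ^ k := by
  classical
  set φ : Stmt6Aux.AA →+* K :=
    MvPolynomial.eval₂Hom (Int.castRingHom K) (fun t => P.coeff t) with hφ
  have h := congrArg φ hn
  rw [map_sum] at h
  have h2 : ∀ c : Fin k → Fin (k+ℓ), φ (n c • Stmt6Aux.mino k ℓ c)
      = n c • ((Rmat k ℓ P).submatrix id c).det := by
    intro c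
    rw [zsmul_eq_mul, zsmul_eq_mul, map_mul, map_intCast]
    congr 1
    rw [Stmt6Aux.mino, RingHom.map_det]
    congr 1
    ext r j
    simp only [RingHom.mapMatrix_apply, Matrix.map_apply, Matrix.submatrix_apply,
      Stmt6Aux.Mu, Matrix.of_apply, id, Rmat]
    split
    · exact MvPolynomial.eval₂Hom_X' (Int.castRingHom K) (fun t => P.coeff t) _
    · exact map_zero φ
  rw [Finset.sum_congr rfl fun c _ => h2 c] at h
  rw [h, map_pow]
  congr 1
  exact MvPolynomial.eval₂Hom_X' _ _ _

lemma le_SRn (pd : PlaceData K ι) (i : ι) (k ℓ : ℕ) (P : K[X])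
    (c : Fin k → Fin (k+ℓ)) :
    pd.v i (((Rmat k ℓ P).submatrix id c).det) ≤ (SRn pd i k ℓ P : ℝ) := by
  have h1 : (Real.toNNReal (pd.v i (((Rmat k ℓ P).submatrix id c).det)))
      ≤ SRn pd i k ℓ P :=
    Finset.le_sup (f := fun c : Fin k → Fin (k+ℓ) =>
      Real.toNNReal (pd.v i (((Rmat k ℓ P).submatrix id c).det))) (Finset.mem_univ c)
  calc pd.v i (((Rmat k ℓ P).submatrix id c).det)
      = ((Real.toNNReal (pd.v i (((Rmat k ℓ P).submatrix id c).det))) : ℝ) :=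
        (Real.coe_toNNReal _ ((pd.v i).nonneg _)).symm
    _ ≤ _ := NNReal.coe_le_coe.2 h1

lemma SRn_le (pd : PlaceData K ι) (i : ι) (k ℓ : ℕ) (P : K[X]) (b : ℝ) (hb : 0 ≤ b)
    (h : ∀ c : Fin k → Fin (k+ℓ), pd.v i (((Rmat k ℓ P).submatrix id c).det) ≤ b) :
    (SRn pd i k ℓ P : ℝ) ≤ b := by
  have h1 : SRn pd i k ℓ P ≤ Real.toNNReal b :=
    Finset.sup_le fun c _ => Real.toNNReal_mono (h c)
  calc ((SRn pd i k ℓ P : NNReal) : ℝ) ≤ ((Real.toNNReal b : NNReal) : ℝ) :=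
        NNReal.coe_le_coe.2 h1
    _ = b := Real.coe_toNNReal _ hb

lemma lc_minor (k ℓ : ℕ) (P : K[X]) (hd : P.natDegree ≤ ℓ) :
    ∃ c : Fin k → Fin (k+ℓ), ((Rmat k ℓ P).submatrix id c).det = P.leadingCoeff ^ k := by
  have hc : ∀ j : Fin k, P.natDegree + (j : ℕ) < k + ℓ := fun j => by
    have := j.isLt; omega
  refine ⟨fun j => ⟨P.natDegree + (j : ℕ), hc j⟩, ?_⟩
  set S := (Rmat k ℓ P).submatrix id (fun j : Fin k => (⟨P.natDegree + (j : ℕ), hc j⟩ : Fin (k+ℓ))) with hS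
  have htri : Matrix.BlockTriangular (Matrix.transpose S) id := by
    intro a b hab
    have h1 : Matrix.transpose S a b = Rmat k ℓ P b ⟨P.natDegree + (a : ℕ), hc a⟩ := rfl
    rw [h1]
    simp only [Rmat]
    split
    · exact Polynomial.coeff_eq_zero_of_natDegree_lt (by simp at hab ⊢; omega)
    · rfl
  have hdet := Matrix.det_of_upperTriangular htri
  rw [← Matrix.det_transpose S, hdet]
  have hdiag : ∀ j : Fin k, Matrix.transpose S j j = P.leadingCoeff := by
    intro j
    have h1 : Matrix.transpose S j j = Rmat k ℓ P j ⟨P.natDegree + (j : ℕ), hc j⟩ := rfl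
    rw [h1]
    simp only [Rmat]
    rw [if_pos ⟨by omega, by omega⟩]
    congr 1
    omega
  rw [Finset.prod_congr rfl fun j _ => hdiag j, Finset.prod_const, Finset.card_univ,
    Fintype.card_fin]

lemma SRn_pos (pd : PlaceData K ι) (i : ι) (k ℓ : ℕ) {P : K[X]} (hP : P ≠ 0)
    (hd : P.natDegree ≤ ℓ) : 0 < (SRn pd i k ℓ P : ℝ) := by
  obtain ⟨c, hc⟩ := lc_minor k ℓ P hd
  refine lt_of_lt_of_le ?_ (le_SRn pd i k ℓ P c)
  rw [hc]
  exact (pd.v i).pos (pow_ne_zero k (Polynomial.leadingCoeff_ne_zero.2 hP))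

lemma local_lower (pd : PlaceData K ι) (i : ι) (k ℓ m : ℕ)
    (n : (Fin k → Fin (k+ℓ)) → ℤ)
    (hn : ∑ c, n c • Stmt6Aux.mino k ℓ c = (MvPolynomial.X m : Stmt6Aux.AA) ^ k)
    (NB : ℕ) (hNB : ∀ c, (n c).natAbs ≤ NB) (P : K[X]) (hP : P ≠ 0)
    (hd : P.natDegree ≤ ℓ) :
    pd.v i (P.coeff m) ^ k
      ≤ ((2:ℝ) ^ ((k+ℓ)^k) * (NB+1)) ^ pd.e i * (SRn pd i k ℓ P : ℝ) := by
  have hSR0 : (0:ℝ) ≤ (SRn pd i k ℓ P : ℝ) := (SRn pd i k ℓ P).2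
  have hid := spec_sum k ℓ m n hn P
  have hterm : ∀ c ∈ (Finset.univ : Finset (Fin k → Fin (k+ℓ))),
      pd.v i (n c • ((Rmat k ℓ P).submatrix id c).det)
        ≤ ((NB:ℝ)+1) ^ pd.e i * (SRn pd i k ℓ P : ℝ) := by
    intro c _
    set D := ((Rmat k ℓ P).submatrix id c).det with hD
    have habs : pd.v i ((n c : ℤ) • D) = pd.v i (((n c).natAbs : K) * D) := by
      have h1 : ((n c : ℤ) : K) = ((n c).natAbs : K) ∨
          ((n c : ℤ) : K) = -((n c).natAbs : K) := by
        rcases Int.natAbs_eq (n c) with h | h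
        · left; nth_rewrite 1 [h]; rw [Int.cast_natCast]
        · right; nth_rewrite 1 [h]; rw [Int.cast_neg, Int.cast_natCast]
      rcases h1 with h | h
      · rw [zsmul_eq_mul, h]
      · rw [zsmul_eq_mul, h, neg_mul, (pd.v i).map_neg]
    rw [habs]
    refine le_trans (aux_nat_mul_le pd i D ((n c).natAbs)) ?_
    refine mul_le_mul ?_ (le_SRn pd i k ℓ P c) ((pd.v i).nonneg D)
      (Real.rpow_nonneg (by positivity) _)
    refine Real.rpow_le_rpow (Nat.cast_nonneg _) ?_ (pd.e_nonneg i)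
    calc ((n c).natAbs : ℝ) ≤ (NB : ℝ) := Nat.cast_le.2 (hNB c)
      _ ≤ (NB : ℝ) + 1 := by linarith
  calc pd.v i (P.coeff m) ^ k = pd.v i (P.coeff m ^ k) := (map_pow _ _ _).symm
    _ = pd.v i (∑ c, n c • ((Rmat k ℓ P).submatrix id c).det) := by rw [hid]
    _ ≤ (2:ℝ) ^ (((Finset.univ : Finset (Fin k → Fin (k+ℓ))).card : ℝ) * pd.e i)
          * (((NB:ℝ)+1) ^ pd.e i * (SRn pd i k ℓ P : ℝ)) :=
        v_sum_le pd i _ _ _ (mul_nonneg (Real.rpow_nonneg (by positivity) _) hSR0) hterm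
    _ = ((2:ℝ) ^ ((k+ℓ)^k) * (NB+1)) ^ pd.e i * (SRn pd i k ℓ P : ℝ) := by
        rw [Finset.card_univ, Fintype.card_fun, Fintype.card_fin, Fintype.card_fin,
          rpow_nat_mul, ← mul_assoc, ← Real.mul_rpow (by positivity) (by positivity)]

lemma prod_rpow (b : ℝ) (hb : 0 < b) {α : Type*} (s : Finset α) (f : α → ℝ) :
    ∏ i ∈ s, b ^ f i = b ^ (∑ i ∈ s, f i) := by
  induction s using Finset.cons_induction with
  | empty => simp
  | cons a s ha ih => rw [Finset.prod_cons, Finset.sum_cons, ih, ← Real.rpow_add hb]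

end Stmt6Aux

/-- Proposition 5.2.  Let `k ≥ 1`, `ℓ ≥ 0`.  There is a constant
`c > 0`, depending only on `k` and `ℓ`, such that every nonzero `P ∈ K[T]` of degree at
most `ℓ` over the number field `K` (axiomatized by `PlaceData`) satisfies
`c⁻¹ H(P)^k ≤ H(P·E_{k-1}) ≤ c H(P)^k`. -/
theorem stmt6 (pd : PlaceData K ι) (k ℓ : ℕ) (hk : 1 ≤ k) :
    ∃ c : ℝ, 0 < c ∧
      ∀ P : K[X], P ≠ 0 → P.natDegree ≤ ℓ →
        c⁻¹ * pd.polyHeight P ^ k ≤ mulSubspaceHeight pd k ℓ P ∧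
        mulSubspaceHeight pd k ℓ P ≤ c * pd.polyHeight P ^ k := by
  classical
  have Hnf : ∀ m : ℕ, ∃ n : (Fin k → Fin (k+ℓ)) → ℤ,
      m ≤ ℓ → ∑ c, n c • Stmt6Aux.mino k ℓ c = (MvPolynomial.X m : Stmt6Aux.AA) ^ k := by
    intro m
    by_cases hm : m ≤ ℓ
    · obtain ⟨n, hn⟩ := Stmt6Aux.exists_intComb k ℓ m hm
      exact ⟨n, fun _ => hn⟩
    · exact ⟨0, fun h => absurd h hm⟩
  choose nf hnf using Hnf
  set NB : ℕ := (Finset.range (ℓ+1)).sup fun m => Finset.univ.sup fun c => (nf m c).natAbs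
    with hNBdef
  have hNB : ∀ m, m ≤ ℓ → ∀ c, (nf m c).natAbs ≤ NB := by
    intro m hm c
    refine le_trans (Finset.le_sup (f := fun c => (nf m c).natAbs) (Finset.mem_univ c)) ?_
    exact Finset.le_sup (f := fun m => Finset.univ.sup fun c => (nf m c).natAbs)
      (Finset.mem_range.2 (Nat.lt_succ_of_le hm))
  set C0 : ℝ := (2:ℝ) ^ k.factorial with hC0def
  set C1 : ℝ := (2:ℝ) ^ ((k+ℓ)^k) * ((NB : ℝ)+1) with hC1def
  have hC0_1 : (1:ℝ) ≤ C0 := one_le_pow₀ (by norm_num)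
  have hC1_1 : (1:ℝ) ≤ C1 := by
    have h1 : (1:ℝ) ≤ (2:ℝ)^((k+ℓ)^k) := one_le_pow₀ (by norm_num)
    have h2 : (1:ℝ) ≤ (NB:ℝ)+1 := by
      have := Nat.cast_nonneg (α := ℝ) NB
      linarith
    nlinarith
  have hC0pos : (0:ℝ) < C0 := lt_of_lt_of_le one_pos hC0_1
  have hC1pos : (0:ℝ) < C1 := lt_of_lt_of_le one_pos hC1_1
  refine ⟨max C0 C1, lt_of_lt_of_le hC0pos (le_max_left _ _), fun P hP hd => ?_⟩
  have hfe : (Function.support pd.e).Finite := by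
    by_contra h
    have h0 := finsum_of_infinite_support (f := pd.e) h
    rw [pd.e_sum] at h0
    norm_num at h0
  have hfN : (Function.mulSupport fun i => pd.polyNorm i P).Finite := by
    refine Set.Finite.subset (Set.Finite.biUnion (P.support.finite_toSet)
      (fun m hm => pd.mulSupport_finite (P.coeff m)
        (Polynomial.mem_support_iff.1 (by exact_mod_cast hm)))) ?_
    intro i hi
    by_contra hnot
    simp only [Set.mem_iUnion, not_exists] at hnot
    apply hi
    have hone : ∀ m, P.coeff m ≠ 0 → pd.v i (P.coeff m) = 1 := by
      intro m hm
      have h1 : i ∉ Function.mulSupport fun j => pd.v j (P.coeff m) := by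
        intro hmem
        exact hnot m (Polynomial.mem_support_iff.2 hm) hmem
      simpa [Function.mulSupport] using h1
    show pd.polyNorm i P = 1
    refine le_antisymm (Finset.sup'_le _ _ fun m _ => ?_) ?_
    · by_cases hm : P.coeff m = 0
      · rw [hm, map_zero]; norm_num
      · rw [hone m hm]
    · have h2 : P.coeff P.natDegree ≠ 0 := by
        rw [← Polynomial.leadingCoeff]
        exact Polynomial.leadingCoeff_ne_zero.2 hP
      calc (1:ℝ) = pd.v i (P.coeff P.natDegree) := (hone _ h2).symm
        _ ≤ pd.polyNorm i P := Finset.le_sup' (fun m => pd.v i (P.coeff m))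
            (Finset.mem_range.2 (Nat.lt_succ_self _))
  have hfS : (Function.mulSupport fun i => ((Stmt6Aux.SRn pd i k ℓ P : NNReal) : ℝ)).Finite := by
    refine Set.Finite.subset (Set.Finite.biUnion
      (Set.toFinite {c : Fin k → Fin (k+ℓ) | ((Stmt6Aux.Rmat k ℓ P).submatrix id c).det ≠ 0})
      (fun c hc => pd.mulSupport_finite _ hc)) ?_
    intro i hi
    by_contra hnot
    simp only [Set.mem_iUnion, not_exists] at hnot
    apply hi
    have hone : ∀ c : Fin k → Fin (k+ℓ), ((Stmt6Aux.Rmat k ℓ P).submatrix id c).det ≠ 0 →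
        pd.v i (((Stmt6Aux.Rmat k ℓ P).submatrix id c).det) = 1 := by
      intro c hc
      have h1 : i ∉ Function.mulSupport fun j =>
          pd.v j (((Stmt6Aux.Rmat k ℓ P).submatrix id c).det) := fun hmem => hnot c hc hmem
      simpa [Function.mulSupport] using h1
    have hSR1 : Stmt6Aux.SRn pd i k ℓ P = 1 := by
      refine le_antisymm (Finset.sup_le fun c _ => ?_) ?_
      · by_cases hc : ((Stmt6Aux.Rmat k ℓ P).submatrix id c).det = 0
        · rw [hc, map_zero]; simp
        · rw [hone c hc]; simp
      · obtain ⟨c0, hc0⟩ := Stmt6Aux.lc_minor k ℓ P hd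
        have hne : ((Stmt6Aux.Rmat k ℓ P).submatrix id c0).det ≠ 0 := by
          rw [hc0]
          exact pow_ne_zero k (Polynomial.leadingCoeff_ne_zero.2 hP)
        calc (1 : NNReal) = Real.toNNReal (pd.v i (((Stmt6Aux.Rmat k ℓ P).submatrix id c0).det)) := by
              rw [hone c0 hne]; simp
          _ ≤ _ := Finset.le_sup (f := fun c : Fin k → Fin (k+ℓ) =>
              Real.toNNReal (pd.v i (((Stmt6Aux.Rmat k ℓ P).submatrix id c).det)))
              (Finset.mem_univ c0)
    show ((Stmt6Aux.SRn pd i k ℓ P : NNReal) : ℝ) = 1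
    rw [hSR1]; simp
  set T : Finset ι := hfN.toFinset ∪ hfS.toFinset ∪ hfe.toFinset with hT
  have hTN : (Function.mulSupport fun i => pd.polyNorm i P) ⊆ ↑T := by
    intro i hi
    simp only [hT, Finset.coe_union, Set.Finite.coe_toFinset, Set.mem_union]
    exact Or.inl (Or.inl hi)
  have hTS : (Function.mulSupport fun i => ((Stmt6Aux.SRn pd i k ℓ P : NNReal) : ℝ)) ⊆ ↑T := by
    intro i hi
    simp only [hT, Finset.coe_union, Set.Finite.coe_toFinset, Set.mem_union]
    exact Or.inl (Or.inr hi)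
  have hTe : (Function.support pd.e) ⊆ ↑T := by
    intro i hi
    simp only [hT, Finset.coe_union, Set.Finite.coe_toFinset, Set.mem_union]
    exact Or.inr hi
  have hheight : mulSubspaceHeight pd k ℓ P = ∏ i ∈ T, ((Stmt6Aux.SRn pd i k ℓ P : NNReal) : ℝ) := by
    rw [Stmt6Aux.mulSubspaceHeight_eq]
    exact finprod_eq_prod_of_mulSupport_subset _ hTS
  have hH : pd.polyHeight P = ∏ i ∈ T, pd.polyNorm i P := by
    rw [PlaceData.polyHeight]
    exact finprod_eq_prod_of_mulSupport_subset _ hTN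
  have hsum1 : ∑ i ∈ T, pd.e i = 1 := by
    rw [← pd.e_sum]
    exact (finsum_eq_sum_of_support_subset _ hTe).symm
  have hup : mulSubspaceHeight pd k ℓ P ≤ C0 * pd.polyHeight P ^ k := by
    rw [hheight, hH, ← Finset.prod_pow]
    calc ∏ i ∈ T, ((Stmt6Aux.SRn pd i k ℓ P : NNReal) : ℝ)
        ≤ ∏ i ∈ T, (C0 ^ pd.e i * pd.polyNorm i P ^ k) := by
          refine Finset.prod_le_prod (fun i _ => (Stmt6Aux.SRn pd i k ℓ P).2) fun i _ => ?_
          refine Stmt6Aux.SRn_le pd i k ℓ P _ (mul_nonneg (Real.rpow_nonneg hC0pos.le _)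
            (pow_nonneg (Stmt6Aux.polyNorm_nonneg pd i P) k)) fun c => ?_
          exact Stmt6Aux.local_upper pd i k ℓ P c
      _ = (∏ i ∈ T, C0 ^ pd.e i) * ∏ i ∈ T, pd.polyNorm i P ^ k := Finset.prod_mul_distrib
      _ = C0 * ∏ i ∈ T, pd.polyNorm i P ^ k := by
          rw [Stmt6Aux.prod_rpow C0 hC0pos, hsum1, Real.rpow_one]
  have hlow : pd.polyHeight P ^ k ≤ C1 * mulSubspaceHeight pd k ℓ P := by
    rw [hheight, hH, ← Finset.prod_pow]
    have h1 : ∀ i ∈ T, pd.polyNorm i P ^ k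
        ≤ C1 ^ pd.e i * ((Stmt6Aux.SRn pd i k ℓ P : NNReal) : ℝ) := by
      intro i _
      obtain ⟨m0, hm0mem, hm0⟩ := Finset.exists_mem_eq_sup'
        (s := Finset.range (P.natDegree+1)) Finset.nonempty_range_add_one
        (fun m => pd.v i (P.coeff m))
      have hm0le : m0 ≤ ℓ := le_trans (Nat.lt_succ_iff.1 (Finset.mem_range.1 hm0mem)) hd
      have heq : pd.polyNorm i P = pd.v i (P.coeff m0) := hm0
      rw [heq]
      exact Stmt6Aux.local_lower pd i k ℓ m0 (nf m0) (hnf m0 hm0le) NB (hNB m0 hm0le) P hP hd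
    calc ∏ i ∈ T, pd.polyNorm i P ^ k
        ≤ ∏ i ∈ T, (C1 ^ pd.e i * ((Stmt6Aux.SRn pd i k ℓ P : NNReal) : ℝ)) :=
          Finset.prod_le_prod (fun i _ => pow_nonneg (Stmt6Aux.polyNorm_nonneg pd i P) k) h1
      _ = C1 * ∏ i ∈ T, ((Stmt6Aux.SRn pd i k ℓ P : NNReal) : ℝ) := by
          rw [Finset.prod_mul_distrib, Stmt6Aux.prod_rpow C1 hC1pos, hsum1, Real.rpow_one]
  have hHpos : 0 < pd.polyHeight P := by
    rw [hH]
    exact Finset.prod_pos fun i _ => Stmt6Aux.polyNorm_pos pd i hP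
  have hhpos : 0 < mulSubspaceHeight pd k ℓ P := by
    rw [hheight]
    exact Finset.prod_pos fun i _ => Stmt6Aux.SRn_pos pd i k ℓ hP hd
  have hmaxpos : (0:ℝ) < max C0 C1 := lt_of_lt_of_le hC0pos (le_max_left _ _)
  constructor
  · have h2 : pd.polyHeight P ^ k ≤ max C0 C1 * mulSubspaceHeight pd k ℓ P :=
      le_trans hlow (mul_le_mul_of_nonneg_right (le_max_right _ _) hhpos.le)
    calc (max C0 C1)⁻¹ * pd.polyHeight P ^ k
        ≤ (max C0 C1)⁻¹ * (max C0 C1 * mulSubspaceHeight pd k ℓ P) :=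
          mul_le_mul_of_nonneg_left h2 (inv_nonneg.2 hmaxpos.le)
      _ = mulSubspaceHeight pd k ℓ P := by field_simp
  · exact le_trans hup (mul_le_mul_of_nonneg_right (le_max_left _ _)
      (pow_nonneg hHpos.le k))
end

section
/- Let t ≥ 1 be an integer and κ > t^{−1}(t+1)^{1+1/t} a real number, and let n ≥ 1. Setting b = (t+1)n, a_ℓ = ⌊b^{ℓ/t}⌋, and ξ_j = \sum_{i=0}^∞ 2^{−a_{j+ti}} for j = 1, …, t, there exists H_0 ≥ 1 such that for every H ≥ H_0 and every choice of complex algebraic numbers α_1, …, α_t of degree ≤ n over Q and height ≤ H, one has max_{1≤j≤t} |ξ_j − α_j| ≥ H^{−κ n^{1/t}}. -/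
open Polynomial

/-- the lacunary exponent sequence `a_ℓ = ⌊b^{ℓ/t}⌋` with `b = (t+1)n`. -/
noncomputable def expSeq (t n : ℕ) (ℓ : ℕ) : ℕ :=
  Nat.floor ((((t + 1) * n : ℕ) : ℝ) ^ ((ℓ : ℝ) / (t : ℝ)))

section ExpSeq
variable {t n : ℕ}

lemma B_ge_two (ht : 1 ≤ t) (hn : 1 ≤ n) : (2:ℝ) ≤ (((t+1)*n : ℕ) : ℝ) := by
  have : 2 ≤ (t+1)*n := by nlinarith
  exact_mod_cast this

lemma B_pos (ht : 1 ≤ t) (hn : 1 ≤ n) : (0:ℝ) < (((t+1)*n : ℕ) : ℝ) := by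
  linarith [B_ge_two ht hn]

lemma expSeq_le (ℓ : ℕ) : (expSeq t n ℓ : ℝ) ≤ (((t+1)*n : ℕ) : ℝ) ^ ((ℓ:ℝ)/(t:ℝ)) :=
  Nat.floor_le (Real.rpow_nonneg (by positivity) _)

lemma lt_expSeq_add_one (ℓ : ℕ) :
    (((t+1)*n : ℕ) : ℝ) ^ ((ℓ:ℝ)/(t:ℝ)) < (expSeq t n ℓ : ℝ) + 1 :=
  Nat.lt_floor_add_one _

lemma one_le_expSeq (ht : 1 ≤ t) (hn : 1 ≤ n) (ℓ : ℕ) : 1 ≤ expSeq t n ℓ := by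
  have h1 : (1:ℝ) ≤ (((t+1)*n : ℕ) : ℝ) ^ ((ℓ:ℝ)/(t:ℝ)) :=
    Real.one_le_rpow (by linarith [B_ge_two ht hn]) (by positivity)
  exact Nat.le_floor (by exact_mod_cast h1)

lemma expSeq_mono (ht : 1 ≤ t) (hn : 1 ≤ n) : Monotone (expSeq t n) := by
  intro ℓ ℓ' h
  apply Nat.floor_le_floor
  apply Real.rpow_le_rpow_of_exponent_le (by linarith [B_ge_two ht hn])
  have ht' : (0:ℝ) < t := by exact_mod_cast ht
  gcongr <;> exact_mod_cast h

lemma rpow_succ_t (ht : 1 ≤ t) (hn : 1 ≤ n) (ℓ : ℕ) :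
    (((t+1)*n : ℕ) : ℝ) ^ (((ℓ+t : ℕ):ℝ)/(t:ℝ))
      = (((t+1)*n : ℕ) : ℝ) ^ ((ℓ:ℝ)/(t:ℝ)) * (((t+1)*n : ℕ) : ℝ) := by
  have ht0 : (t:ℝ) ≠ 0 := by
    have : (0:ℝ) < t := by exact_mod_cast ht
    linarith
  rw [show (((ℓ+t : ℕ):ℝ)/(t:ℝ)) = (ℓ:ℝ)/(t:ℝ) + 1 by push_cast; field_simp]
  rw [Real.rpow_add (B_pos ht hn), Real.rpow_one]

lemma mul_expSeq_le (ht : 1 ≤ t) (hn : 1 ≤ n) (ℓ : ℕ) :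
    (t+1)*n * expSeq t n ℓ ≤ expSeq t n (ℓ + t) := by
  apply Nat.le_floor
  rw [rpow_succ_t ht hn ℓ, Nat.cast_mul]
  rw [mul_comm ((((t+1)*n : ℕ) : ℝ) ^ ((ℓ:ℝ)/(t:ℝ)))]
  exact mul_le_mul_of_nonneg_left (expSeq_le ℓ) (le_of_lt (B_pos ht hn))

lemma expSeq_le_mul (ht : 1 ≤ t) (hn : 1 ≤ n) (ℓ : ℕ) :
    expSeq t n (ℓ + t) ≤ (t+1)*n * expSeq t n ℓ + (t+1)*n := by
  have h : (expSeq t n (ℓ+t) : ℝ) ≤ (((t+1)*n * expSeq t n ℓ + (t+1)*n : ℕ) : ℝ) := by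
    calc (expSeq t n (ℓ+t) : ℝ) ≤ _ := expSeq_le (ℓ+t)
    _ = (((t+1)*n : ℕ) : ℝ) ^ ((ℓ:ℝ)/(t:ℝ)) * (((t+1)*n : ℕ) : ℝ) := rpow_succ_t ht hn ℓ
    _ ≤ ((expSeq t n ℓ : ℝ) + 1) * (((t+1)*n : ℕ) : ℝ) := by
        have := lt_expSeq_add_one (t := t) (n := n) ℓ
        nlinarith [B_pos ht hn]
    _ = _ := by push_cast; ring
  exact_mod_cast h

lemma expSeq_consec (ht : 1 ≤ t) (hn : 1 ≤ n) (ℓ : ℕ) :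
    (expSeq t n (ℓ+1) : ℝ) ≤ (((t+1)*n : ℕ) : ℝ) ^ ((1:ℝ)/(t:ℝ)) * ((expSeq t n ℓ : ℝ) + 1) := by
  have ht0 : (t:ℝ) ≠ 0 := by
    have : (0:ℝ) < t := by exact_mod_cast ht
    linarith
  calc (expSeq t n (ℓ+1) : ℝ) ≤ _ := expSeq_le (ℓ+1)
  _ = (((t+1)*n : ℕ) : ℝ) ^ ((1:ℝ)/(t:ℝ)) * (((t+1)*n : ℕ) : ℝ) ^ ((ℓ:ℝ)/(t:ℝ)) := by
      rw [← Real.rpow_add (B_pos ht hn)]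
      congr 1
      push_cast
      ring
  _ ≤ _ := by
      have h1 := lt_expSeq_add_one (t := t) (n := n) ℓ
      have h2 : (0:ℝ) ≤ (((t+1)*n : ℕ) : ℝ) ^ ((1:ℝ)/(t:ℝ)) :=
        Real.rpow_nonneg (le_of_lt (B_pos ht hn)) _
      nlinarith

lemma expSeq_step (ht : 1 ≤ t) (hn : 1 ≤ n) (j i : ℕ) :
    expSeq t n j + i ≤ expSeq t n (j + t * i) := by
  induction i with
  | zero => simp
  | succ i ih =>
    have h1 : (t+1)*n * expSeq t n (j + t*i) ≤ expSeq t n (j + t*i + t) := mul_expSeq_le ht hn _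
    have h2 : 2 ≤ (t+1)*n := by nlinarith
    have h3 : 1 ≤ expSeq t n (j + t*i) := one_le_expSeq ht hn _
    have he : j + t * (i+1) = j + t*i + t := by ring
    rw [he]
    nlinarith

end ExpSeq

/-- the Liouville-type number `ξ_j = ∑_{i=0}^∞ 2^{−a_{j+ti}}`. -/
noncomputable def liouvilleXi (t n j : ℕ) : ℝ :=
  ∑' i : ℕ, (2 : ℝ) ^ (-(expSeq t n (j + t * i) : ℤ))

section Xi
variable {t n : ℕ}

lemma xiTerm_le (ht : 1 ≤ t) (hn : 1 ≤ n) (j : ℕ) (hj : 1 ≤ j) (i : ℕ) :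
    (2 : ℝ) ^ (-(expSeq t n (j + t * i) : ℤ)) ≤ (1/2:ℝ)^(i+1) := by
  have h1 : (i+1 : ℕ) ≤ expSeq t n (j + t*i) := by
    have := expSeq_step ht hn j i
    have := one_le_expSeq ht hn (t:=t) (n:=n) j
    omega
  calc (2 : ℝ) ^ (-(expSeq t n (j + t * i) : ℤ)) ≤ (2:ℝ) ^ (-((i:ℤ)+1)) := by
        apply zpow_le_zpow_right₀ (by norm_num)
        have : ((i:ℤ)+1) ≤ (expSeq t n (j + t*i) : ℤ) := by exact_mod_cast h1
        omega
  _ = (1/2:ℝ)^(i+1) := by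
        rw [show (-((i:ℤ) + 1) : ℤ) = -((i+1 : ℕ) : ℤ) by push_cast; ring, zpow_neg,
          zpow_natCast, one_div_pow, one_div]

lemma xiTerm_nonneg (j i : ℕ) : (0:ℝ) ≤ (2 : ℝ) ^ (-(expSeq t n (j + t * i) : ℤ)) := by
  positivity

lemma summable_xi (ht : 1 ≤ t) (hn : 1 ≤ n) (j : ℕ) (hj : 1 ≤ j) :
    Summable (fun i : ℕ => (2 : ℝ) ^ (-(expSeq t n (j + t * i) : ℤ))) := by
  apply Summable.of_nonneg_of_le (fun i => xiTerm_nonneg j i)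
    (fun i => (xiTerm_le ht hn j hj i).trans
      (pow_le_pow_of_le_one (by norm_num) (by norm_num) (Nat.le_succ i)))
    (summable_geometric_of_lt_one (by norm_num) (by norm_num))

lemma xi_nonneg (j : ℕ) : 0 ≤ liouvilleXi t n j :=
  tsum_nonneg (fun i => xiTerm_nonneg j i)

lemma xi_le_one (ht : 1 ≤ t) (hn : 1 ≤ n) (j : ℕ) (hj : 1 ≤ j) : liouvilleXi t n j ≤ 1 := by
  have hg : Summable (fun i : ℕ => (1/2:ℝ)^(i+1)) := by
    apply Summable.comp_injective (f := fun i : ℕ => (1/2:ℝ)^i)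
      (summable_geometric_of_lt_one (by norm_num) (by norm_num)) Nat.succ_injective
  have := Summable.tsum_le_tsum (fun i => xiTerm_le ht hn j hj i) (summable_xi ht hn j hj) hg
  apply this.trans
  have : ∑' i : ℕ, (1/2:ℝ)^(i+1) = (1/2) * ∑' i : ℕ, (1/2:ℝ)^i := by
    rw [← tsum_mul_left]
    congr 1 with i
    ring
  rw [this, tsum_geometric_of_lt_one (by norm_num) (by norm_num)]
  norm_num

/-- decomposition into partial sum and tail -/
lemma xi_eq_partial_add_tail (ht : 1 ≤ t) (hn : 1 ≤ n) (j : ℕ) (hj : 1 ≤ j) (m : ℕ) :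
    liouvilleXi t n j =
      (∑ i ∈ Finset.range (m+1), (2 : ℝ) ^ (-(expSeq t n (j + t * i) : ℤ)))
      + ∑' i : ℕ, (2 : ℝ) ^ (-(expSeq t n (j + t * (i + (m+1))) : ℤ)) :=
  (Summable.sum_add_tsum_nat_add (m+1) (summable_xi ht hn j hj)).symm

lemma tail_lower (ht : 1 ≤ t) (hn : 1 ≤ n) (j : ℕ) (hj : 1 ≤ j) (m : ℕ) :
    (2 : ℝ) ^ (-(expSeq t n (j + t * m + t) : ℤ))
      ≤ ∑' i : ℕ, (2 : ℝ) ^ (-(expSeq t n (j + t * (i + (m+1))) : ℤ)) := by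
  have hs : Summable (fun i : ℕ => (2 : ℝ) ^ (-(expSeq t n (j + t * (i + (m+1))) : ℤ))) := by
    exact (summable_nat_add_iff (f := fun i : ℕ => (2:ℝ) ^ (-(expSeq t n (j + t * i) : ℤ))) (m+1)).2
      (summable_xi ht hn j hj)
  have h0 := Summable.le_tsum hs 0 (fun i _ => xiTerm_nonneg j _)
  have he : j + t * (0 + (m+1)) = j + t*m + t := by ring
  rwa [he] at h0

lemma tail_upper (ht : 1 ≤ t) (hn : 1 ≤ n) (j : ℕ) (hj : 1 ≤ j) (m : ℕ) :
    (∑' i : ℕ, (2 : ℝ) ^ (-(expSeq t n (j + t * (i + (m+1))) : ℤ)))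
      ≤ 2 * (2 : ℝ) ^ (-(expSeq t n (j + t * m + t) : ℤ)) := by
  have hs : Summable (fun i : ℕ => (2 : ℝ) ^ (-(expSeq t n (j + t * (i + (m+1))) : ℤ))) := by
    exact (summable_nat_add_iff (f := fun i : ℕ => (2:ℝ) ^ (-(expSeq t n (j + t * i) : ℤ))) (m+1)).2
      (summable_xi ht hn j hj)
  have hbound : ∀ i : ℕ, (2 : ℝ) ^ (-(expSeq t n (j + t * (i + (m+1))) : ℤ))
      ≤ (2 : ℝ) ^ (-(expSeq t n (j + t * m + t) : ℤ)) * (1/2:ℝ)^i := by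
    intro i
    have h1 : expSeq t n (j + t*m + t) + i ≤ expSeq t n (j + t * (i + (m+1))) := by
      have := expSeq_step ht hn (j + t*m + t) i
      have he : j + t*m + t + t*i = j + t*(i+(m+1)) := by ring
      rw [he] at this
      exact this
    calc (2 : ℝ) ^ (-(expSeq t n (j + t * (i + (m+1))) : ℤ))
        ≤ (2:ℝ) ^ (-((expSeq t n (j + t*m + t) : ℤ) + i)) := by
          apply zpow_le_zpow_right₀ (by norm_num)
          have : ((expSeq t n (j + t*m + t) : ℤ) + i) ≤ (expSeq t n (j + t * (i + (m+1))) : ℤ) := by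
            exact_mod_cast h1
          omega
    _ = (2 : ℝ) ^ (-(expSeq t n (j + t * m + t) : ℤ)) * (1/2:ℝ)^i := by
          rw [neg_add, zpow_add₀ (by norm_num : (2:ℝ) ≠ 0)]
          congr 1
          rw [zpow_neg, zpow_natCast, one_div_pow, one_div]
  have hg : Summable (fun i : ℕ => (2 : ℝ) ^ (-(expSeq t n (j + t * m + t) : ℤ)) * (1/2:ℝ)^i) :=
    (summable_geometric_of_lt_one (by norm_num) (by norm_num)).mul_left _
  have := Summable.tsum_le_tsum hbound hs hg
  apply this.trans
  rw [tsum_mul_left, tsum_geometric_of_lt_one (by norm_num) (by norm_num)]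
  norm_num
  rw [mul_comm]

end Xi

section Alg

/-- partial sum is a rational with power-of-two denominator -/
lemma partial_eq_div {t n : ℕ} (ht : 1 ≤ t) (hn : 1 ≤ n) (j m : ℕ) :
    (∑ i ∈ Finset.range (m+1), (2 : ℝ) ^ (-(expSeq t n (j + t * i) : ℤ)))
      = ((∑ i ∈ Finset.range (m+1), 2^(expSeq t n (j + t*m) - expSeq t n (j + t*i)) : ℕ) : ℝ)
        / 2 ^ (expSeq t n (j + t*m)) := by
  rw [Nat.cast_sum, Finset.sum_div]
  apply Finset.sum_congr rfl
  intro i hi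
  have hi' : i ≤ m := Nat.lt_succ_iff.mp (Finset.mem_range.mp hi)
  have hle : expSeq t n (j + t*i) ≤ expSeq t n (j + t*m) :=
    expSeq_mono ht hn (Nat.add_le_add_left (Nat.mul_le_mul_left t hi') j)
  rw [Nat.cast_pow, Nat.cast_ofNat,
    eq_div_iff (by positivity : (2:ℝ)^(expSeq t n (j+t*m)) ≠ 0),
    ← zpow_natCast (2:ℝ) (expSeq t n (j + t*m)),
    ← zpow_natCast (2:ℝ) (expSeq t n (j + t*m) - expSeq t n (j + t*i)),
    ← zpow_add₀ (two_ne_zero)]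
  congr 1
  omega

/-- Liouville-type lower bound for a nonvanishing integer polynomial at a rational -/
lemma liouville_lb (p : Polynomial ℤ) (n : ℕ) (hdeg : p.natDegree ≤ n) (P N : ℕ) (hN : 0 < N)
    (h0 : Polynomial.aeval ((P:ℝ)/(N:ℝ)) p ≠ 0) :
    ((N:ℝ)^n)⁻¹ ≤ |Polynomial.aeval ((P:ℝ)/(N:ℝ)) p| := by
  set r : ℝ := (P:ℝ)/(N:ℝ) with hr
  have hNne : (N:ℝ) ≠ 0 := by positivity
  have heval : Polynomial.aeval r p = ∑ k ∈ Finset.range (n+1), (p.coeff k : ℝ) * r^k := by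
    rw [Polynomial.aeval_eq_sum_range' (lt_of_le_of_lt hdeg (Nat.lt_succ_self n))]
    apply Finset.sum_congr rfl
    intro k _
    rw [zsmul_eq_mul]
  set z : ℤ := ∑ k ∈ Finset.range (n+1), p.coeff k * (P:ℤ)^k * (N:ℤ)^(n-k) with hzdef
  have hkey : ∀ k, k ≤ n → r^k * (N:ℝ)^n = (P:ℝ)^k * (N:ℝ)^(n-k) := by
    intro k hk
    have hNk : (N:ℝ)^n = (N:ℝ)^k * (N:ℝ)^(n-k) := by rw [← pow_add]; congr 1; omega
    rw [hr, div_pow, hNk, ← mul_assoc, div_mul_cancel₀ _ (by positivity : (N:ℝ)^k ≠ 0)]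
  have hz : (z:ℝ) = (N:ℝ)^n * Polynomial.aeval r p := by
    rw [heval, Finset.mul_sum, hzdef]
    push_cast
    apply Finset.sum_congr rfl
    intro k hk
    have hk' : k ≤ n := Nat.lt_succ_iff.mp (Finset.mem_range.mp hk)
    calc ((p.coeff k : ℝ)) * (P:ℝ)^k * (N:ℝ)^(n-k)
        = (p.coeff k : ℝ) * ((P:ℝ)^k * (N:ℝ)^(n-k)) := by ring
    _ = (p.coeff k : ℝ) * (r^k * (N:ℝ)^n) := by rw [hkey k hk']
    _ = (N:ℝ)^n * ((p.coeff k : ℝ) * r^k) := by ring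
  have hzne : z ≠ 0 := by
    intro h
    apply h0
    have h2 : (N:ℝ)^n * Polynomial.aeval r p = 0 := by rw [← hz, h]; simp
    rcases mul_eq_zero.mp h2 with h3 | h3
    · exact absurd h3 (by positivity)
    · exact h3
  have h1 : (1:ℝ) ≤ |(z:ℝ)| := by
    have := Int.one_le_abs hzne
    exact_mod_cast this
  rw [hz, abs_mul, abs_of_nonneg (by positivity : (0:ℝ) ≤ (N:ℝ)^n)] at h1
  rw [inv_le_iff_one_le_mul₀ (by positivity)]
  linarith

end Alg

section Alg2
open Polynomial

lemma pow_sub_pow_abs (x y : ℂ) (hx : ‖x‖ ≤ 2) (hy : ‖y‖ ≤ 2) (k : ℕ) :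
    ‖x^k - y^k‖ ≤ (k * 2^(k-1)) * ‖x - y‖ := by
  rw [← geom_sum₂_mul x y k, norm_mul]
  apply mul_le_mul_of_nonneg_right ?_ (norm_nonneg _)
  calc ‖∑ i ∈ Finset.range k, x ^ i * y ^ (k - 1 - i)‖
      ≤ ∑ i ∈ Finset.range k, ‖x ^ i * y ^ (k - 1 - i)‖ := by
        apply norm_sum_le
  _ ≤ ∑ i ∈ Finset.range k, (2:ℝ)^(k-1) := by
        apply Finset.sum_le_sum
        intro i hi
        have hi' : i < k := Finset.mem_range.mp hi
        rw [norm_mul, norm_pow, norm_pow]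
        calc ‖x‖ ^ i * ‖y‖ ^ (k-1-i) ≤ 2^i * 2^(k-1-i) := by
              apply mul_le_mul (pow_le_pow_left₀ (norm_nonneg _) hx i)
                (pow_le_pow_left₀ (norm_nonneg _) hy _)
                (by positivity) (by positivity)
        _ = 2^(k-1) := by rw [← pow_add]; congr 1; omega
  _ = k * 2^(k-1) := by rw [Finset.sum_const, Finset.card_range, nsmul_eq_mul]

lemma eval_diff_bound (p : Polynomial ℤ) (n : ℕ) (hn : 1 ≤ n) (hdeg : p.natDegree ≤ n)
    (Hc : ℝ) (hcoeff : ∀ k, (|(p.coeff k : ℤ)| : ℝ) ≤ Hc) (x y : ℂ)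
    (hx : ‖x‖ ≤ 2) (hy : ‖y‖ ≤ 2) :
    ‖Polynomial.aeval x p - Polynomial.aeval y p‖
      ≤ Hc * ((n+1) * n * 2^n) * ‖x - y‖ := by
  have hH0 : 0 ≤ Hc := le_trans (by positivity) (hcoeff 0)
  have hlt : p.natDegree < n + 1 := Nat.lt_succ_of_le hdeg
  rw [Polynomial.aeval_eq_sum_range' hlt x, Polynomial.aeval_eq_sum_range' hlt y,
    ← Finset.sum_sub_distrib]
  calc ‖∑ k ∈ Finset.range (n+1), (p.coeff k • x ^ k - p.coeff k • y ^ k)‖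
      ≤ ∑ k ∈ Finset.range (n+1), ‖p.coeff k • x ^ k - p.coeff k • y ^ k‖ :=
        norm_sum_le _ _
  _ ≤ ∑ k ∈ Finset.range (n+1), Hc * (n * 2^n) * ‖x - y‖ := by
        apply Finset.sum_le_sum
        intro k hk
        have hk' : k ≤ n := Nat.lt_succ_iff.mp (Finset.mem_range.mp hk)
        have h1 : (p.coeff k • x ^ k - p.coeff k • y ^ k) = ((p.coeff k : ℂ)) * (x^k - y^k) := by
          rw [zsmul_eq_mul, zsmul_eq_mul]; ring
        rw [h1, norm_mul]
        have h2 : ‖(p.coeff k : ℂ)‖ ≤ Hc := by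
          rw [show ((p.coeff k : ℂ)) = (((p.coeff k : ℝ)) : ℂ) by push_cast; rfl,
            Complex.norm_real, Real.norm_eq_abs]
          exact hcoeff k
        calc ‖(p.coeff k : ℂ)‖ * ‖x^k - y^k‖
            ≤ Hc * ((k * 2^(k-1)) * ‖x - y‖) := by
              apply mul_le_mul h2 (pow_sub_pow_abs x y hx hy k) (norm_nonneg _) hH0
        _ ≤ Hc * ((n * 2^n) * ‖x - y‖) := by
              apply mul_le_mul_of_nonneg_left ?_ hH0
              apply mul_le_mul_of_nonneg_right ?_ (norm_nonneg _)
              have : (2:ℝ)^(k-1) ≤ 2^n := pow_le_pow_right₀ (by norm_num) (by omega)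
              have hkn : (k:ℝ) ≤ n := by exact_mod_cast hk'
              nlinarith [pow_nonneg (by norm_num : (0:ℝ) ≤ 2) (k-1)]
        _ = Hc * (n * 2^n) * ‖x - y‖ := by ring
  _ = (n+1) * (Hc * (n * 2^n) * ‖x - y‖) := by
        rw [Finset.sum_const, Finset.card_range, nsmul_eq_mul]; push_cast; ring
  _ = Hc * ((n+1) * n * 2^n) * ‖x - y‖ := by push_cast; ring

lemma irreducible_root_eq (p : Polynomial ℤ) (hp : p ≠ 0) (hirr : Irreducible p) (q : ℚ)
    (hq : Polynomial.aeval ((q : ℝ)) p = 0) (α : ℂ) (hα : Polynomial.aeval α p = 0) :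
    α = ((q : ℝ) : ℂ) := by
  -- degree ≥ 1
  have hdeg1 : 1 ≤ p.natDegree := by
    by_contra h
    push_neg at h
    interval_cases hd : p.natDegree
    · obtain ⟨c, hc⟩ := Polynomial.natDegree_eq_zero.mp hd
      rw [← hc] at hα hp
      simp only [Polynomial.aeval_C] at hα
      have hc0 : (c : ℂ) = 0 := hα
      have : c = 0 := by exact_mod_cast hc0
      rw [this] at hp
      simp at hp
  -- rational root over ℚ
  have hqQ : Polynomial.aeval q p = 0 := by
    have := Polynomial.aeval_algebraMap_apply ℝ q p
    rw [show (algebraMap ℚ ℝ) q = (q:ℝ) from rfl] at this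
    rw [hq] at this
    have h2 : ((Polynomial.aeval q p : ℚ) : ℝ) = 0 := this.symm
    exact_mod_cast h2
  -- p is primitive
  have hprim : p.IsPrimitive := by
    intro r hr
    obtain ⟨s, hs⟩ := hr
    rcases hirr.isUnit_or_isUnit hs with h | h
    · exact Polynomial.isUnit_C.mp h
    · exfalso
      have h1 : p.natDegree = (Polynomial.C r * s).natDegree := by rw [hs]
      have h2 : s.natDegree = 0 := Polynomial.natDegree_eq_zero_of_isUnit h
      have h3 : (Polynomial.C r * s).natDegree ≤ 0 + s.natDegree :=
        (Polynomial.natDegree_mul_le).trans (by simp)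
      omega
  -- map to ℚ
  have hirrQ : Irreducible (p.map (Int.castRingHom ℚ)) :=
    (Polynomial.IsPrimitive.Int.irreducible_iff_irreducible_map_cast hprim).mp hirr
  have hroot : (p.map (Int.castRingHom ℚ)).IsRoot q := by
    rw [Polynomial.IsRoot, Polynomial.eval_map]
    exact hqQ
  obtain ⟨s, hs⟩ := (Polynomial.dvd_iff_isRoot).mpr hroot
  have hdq : (p.map (Int.castRingHom ℚ)).natDegree = 1 := by
    rcases hirrQ.isUnit_or_isUnit hs with h | h
    · exfalso
      have := Polynomial.natDegree_eq_zero_of_isUnit h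
      rw [Polynomial.natDegree_X_sub_C] at this
      omega
    · have h2 : s.natDegree = 0 := Polynomial.natDegree_eq_zero_of_isUnit h
      rw [hs, Polynomial.natDegree_mul (Polynomial.X_sub_C_ne_zero q)
        (fun h0 => by simp [h0] at hs; exact hirrQ.ne_zero hs)]
      rw [Polynomial.natDegree_X_sub_C, h2]
  have hdp : p.natDegree = 1 := by
    rw [← Polynomial.natDegree_map_eq_of_injective
      (f := Int.castRingHom ℚ) Int.cast_injective p]
    exact hdq
  -- p = c1 X + c0
  have hpeq := Polynomial.eq_X_add_C_of_natDegree_le_one (le_of_eq hdp)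
  have hc1 : p.coeff 1 ≠ 0 := by
    intro h
    rw [h] at hpeq
    simp at hpeq
    rw [hpeq] at hdp
    simp [Polynomial.natDegree_C] at hdp
  -- evaluate
  have hαeq : (p.coeff 1 : ℂ) * α + (p.coeff 0 : ℂ) = 0 := by
    have := hα
    rw [hpeq] at this
    simpa [mul_comm] using this
  have hqeq : (p.coeff 1 : ℝ) * (q:ℝ) + (p.coeff 0 : ℝ) = 0 := by
    have := hq
    rw [hpeq] at this
    simpa [mul_comm] using this
  have hqeqC : (p.coeff 1 : ℂ) * ((q:ℝ):ℂ) + (p.coeff 0 : ℂ) = 0 := by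
    have h := congrArg (fun x : ℝ => (x : ℂ)) hqeq
    push_cast at h
    exact_mod_cast h
  have hc1C : (p.coeff 1 : ℂ) ≠ 0 := by exact_mod_cast hc1
  have key : (p.coeff 1 : ℂ) * (α - ((q:ℝ):ℂ)) = 0 := by
    linear_combination hαeq - hqeqC
  rcases mul_eq_zero.mp key with h | h
  · exact absurd h hc1C
  · exact sub_eq_zero.mp h

end Alg2

section Choose

lemma expSeq_zero {t n : ℕ} (ht : 1 ≤ t) (hn : 1 ≤ n) : expSeq t n 0 = 1 := by
  unfold expSeq
  norm_num

lemma exists_ell {t n : ℕ} (ht : 1 ≤ t) (hn : 1 ≤ n) (L : ℝ) (hL : 1 < L) :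
    ∃ ℓ : ℕ, 1 ≤ ℓ ∧ L ≤ (expSeq t n ℓ : ℝ) ∧
      (expSeq t n ℓ : ℝ) ≤ (((t+1)*n : ℕ) : ℝ) ^ ((1:ℝ)/(t:ℝ)) * (L + 1) := by
  set K := ⌈L⌉₊ with hK
  have hK2 : 2 ≤ K := by
    have : 1 < K := Nat.lt_ceil.mpr (by exact_mod_cast hL)
    omega
  have hexists : ∃ ℓ, K ≤ expSeq t n ℓ := by
    refine ⟨t*K, ?_⟩
    have h1 := expSeq_step ht hn 0 K
    rw [Nat.zero_add] at h1
    omega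
  set ℓ := Nat.find hexists with hℓdef
  have hfind : K ≤ expSeq t n ℓ := Nat.find_spec hexists
  have hℓ1 : 1 ≤ ℓ := by
    by_contra h
    push_neg at h
    interval_cases ℓ
    · rw [expSeq_zero ht hn] at hfind; omega
  have hprev : expSeq t n (ℓ-1) < K := by
    have := Nat.find_min hexists (m := ℓ-1) (by omega)
    omega
  have hKL : (K:ℝ) < L + 1 := by
    have := Nat.ceil_lt_add_one (le_of_lt (lt_trans zero_lt_one hL))
    exact_mod_cast this
  have hLK : L ≤ (K:ℝ) := Nat.le_ceil L
  refine ⟨ℓ, hℓ1, le_trans hLK (by exact_mod_cast hfind), ?_⟩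
  have hconsec := expSeq_consec ht hn (ℓ-1)
  rw [Nat.sub_add_cancel hℓ1] at hconsec
  have hprevR : (expSeq t n (ℓ-1) : ℝ) + 1 ≤ (K:ℝ) := by
    have : expSeq t n (ℓ-1) + 1 ≤ K := hprev
    exact_mod_cast this
  have hβ0 : (0:ℝ) ≤ (((t+1)*n : ℕ) : ℝ) ^ ((1:ℝ)/(t:ℝ)) :=
    Real.rpow_nonneg (le_of_lt (B_pos ht hn)) _
  calc (expSeq t n ℓ : ℝ) ≤ (((t+1)*n : ℕ) : ℝ) ^ ((1:ℝ)/(t:ℝ)) * ((expSeq t n (ℓ-1) : ℝ) + 1) := hconsec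
  _ ≤ (((t+1)*n : ℕ) : ℝ) ^ ((1:ℝ)/(t:ℝ)) * (L + 1) := by
      apply mul_le_mul_of_nonneg_left ?_ hβ0
      linarith

end Choose

set_option maxHeartbeats 2000000 in
/-- Proposition 10.2 for the archimedean place of `ℚ`.  Let
`t ≥ 1`, `κ > t⁻¹(t+1)^{1+1/t}`, `n ≥ 1`.  With `b = (t+1)n`, `a_ℓ = ⌊b^{ℓ/t}⌋` and
`ξ_j = ∑_i 2^{−a_{j+ti}}` for `j = 1, …, t`, there exists `H₀ ≥ 1` such that for all
`H ≥ H₀` and all complex algebraic numbers `α_1, …, α_t` of degree `≤ n` over `ℚ` and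
height `≤ H` (the height being the max absolute value of the coefficients of the
minimal polynomial over `ℤ`), one has `max_{1≤j≤t} |ξ_j − α_j| ≥ H^{−κ n^{1/t}}`. -/
theorem stmt13 (t n : ℕ) (ht : 1 ≤ t) (hn : 1 ≤ n) (κ : ℝ)
    (hκ : κ > ((t : ℝ))⁻¹ * ((t : ℝ) + 1) ^ (1 + 1 / (t : ℝ))) :
    ∃ H₀ : ℝ, 1 ≤ H₀ ∧
      ∀ H : ℝ, H₀ ≤ H →
      ∀ α : Fin t → ℂ,
        (∀ j, ∃ p : Polynomial ℤ, p ≠ 0 ∧ Irreducible p ∧ p.natDegree ≤ n ∧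
          (∀ k, (|(p.coeff k : ℤ)| : ℝ) ≤ H) ∧ Polynomial.aeval (α j) p = 0) →
        ∃ j : Fin t,
          ‖(liouvilleXi t n ((j : ℕ) + 1) : ℂ) - α j‖ ≥
            H ^ (-(κ * (n : ℝ) ^ ((t : ℝ))⁻¹)) := by
  obtain ⟨τ, hτdef⟩ : ∃ x:ℝ, x = (t:ℝ) := ⟨_, rfl⟩
  obtain ⟨ν, hνdef⟩ : ∃ x:ℝ, x = (n:ℝ) := ⟨_, rfl⟩
  have hτ1 : (1:ℝ) ≤ τ := by rw [hτdef]; exact_mod_cast ht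
  have hν1 : (1:ℝ) ≤ ν := by rw [hνdef]; exact_mod_cast hn
  have hτ0 : (0:ℝ) < τ := by linarith
  have hν0 : (0:ℝ) < ν := by linarith
  obtain ⟨B, hBdef⟩ : ∃ x:ℝ, x = (((t+1)*n : ℕ) : ℝ) := ⟨_, rfl⟩
  have hBeq : B = (τ + 1) * ν := by rw [hBdef, hτdef, hνdef]; push_cast; ring
  have hB2 : (2:ℝ) ≤ B := by rw [hBdef]; exact B_ge_two ht hn
  obtain ⟨β, hβdef⟩ : ∃ x:ℝ, x = B ^ ((1:ℝ)/τ) := ⟨_, rfl⟩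
  have hβ1 : 1 < β := by
    rw [hβdef, Real.one_lt_rpow_iff_of_pos (by linarith)]
    left
    constructor <;> [linarith; positivity]
  obtain ⟨c, hcdef⟩ : ∃ x:ℝ, x = κ * ν ^ (τ⁻¹) := ⟨_, rfl⟩
  have hνrp : (0:ℝ) < ν ^ (τ⁻¹) := Real.rpow_pos_of_pos hν0 _
  have hc1 : β * (τ + 1) / τ < c := by
    have hsplit : β = (τ+1) ^ ((1:ℝ)/τ) * ν ^ ((1:ℝ)/τ) := by
      rw [hβdef, hBeq, Real.mul_rpow (by linarith) (by linarith)]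
    have hpow : (τ+1) ^ (1 + 1/τ) = (τ+1) * (τ+1) ^ ((1:ℝ)/τ) := by
      rw [Real.rpow_add (by linarith), Real.rpow_one]
    have hκ' : κ > τ⁻¹ * (τ + 1) ^ (1 + 1/τ) := by rw [hτdef]; exact hκ
    have hmul := mul_lt_mul_of_pos_right hκ' hνrp
    have heqq : τ⁻¹ * (τ + 1) ^ (1 + 1 / τ) * ν ^ τ⁻¹ = β * (τ + 1) / τ := by
      rw [hpow, hsplit, one_div]
      field_simp
    rw [heqq] at hmul
    rw [hcdef]
    exact hmul
  have heβ : β * (τ+1)/τ = β/τ + β := by field_simp; ring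
  have hβτ0 : 0 ≤ β/τ := by positivity
  have hc2 : β / τ + 1 < c := by linarith [heβ, hc1, hβ1]
  have hc0 : 0 < c := by linarith [hc2, hβτ0]
  obtain ⟨Cn, hCndef⟩ : ∃ x:ℝ, x = (ν+1) * ν * 2^n := ⟨_, rfl⟩
  have h2n : (1:ℝ) ≤ 2^n := one_le_pow₀ (by norm_num)
  have hCn1 : (1:ℝ) ≤ Cn := by
    rw [hCndef]
    have hp : (1:ℝ) ≤ (ν+1)*ν := by nlinarith
    calc (1:ℝ) = 1*1 := by norm_num
    _ ≤ ((ν+1)*ν) * 2^n := mul_le_mul hp h2n (by norm_num) (by nlinarith)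
  have hCnpos : (0:ℝ) < Cn := by linarith
  obtain ⟨lC, hlCdef⟩ : ∃ x:ℝ, x = Real.logb 2 Cn := ⟨_, rfl⟩
  have hlC0 : 0 ≤ lC := by rw [hlCdef]; exact Real.logb_nonneg (by norm_num) hCn1
  have hCeq : (2:ℝ) ^ lC = Cn := by
    rw [hlCdef]; exact Real.rpow_logb (by norm_num) (by norm_num) hCnpos
  obtain ⟨D, hDdef⟩ : ∃ x:ℝ, x = lC + 2 := ⟨_, rfl⟩
  have hD2 : 2 ≤ D := by rw [hDdef]; linarith
  obtain ⟨g₁, hg₁def⟩ : ∃ x:ℝ, x = c - β * (τ+1)/τ := ⟨_, rfl⟩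
  obtain ⟨g₂, hg₂def⟩ : ∃ x:ℝ, x = c - 1 - β/τ := ⟨_, rfl⟩
  have hg₁0 : 0 < g₁ := by rw [hg₁def]; linarith
  have hg₂0 : 0 < g₂ := by rw [hg₂def]; linarith
  obtain ⟨γ₁, hγ₁def⟩ : ∃ x:ℝ, x = β*((τ+1)/τ)*D + B*β + B := ⟨_, rfl⟩
  obtain ⟨γ₂, hγ₂def⟩ : ∃ x:ℝ, x = (β/τ)*D + ν*β + D + 1 := ⟨_, rfl⟩
  obtain ⟨A₀, hA₀def⟩ : ∃ x:ℝ, x = max (max (γ₁/g₁) (γ₂/g₂)) (max (τ*ν+1) 1) := ⟨_, rfl⟩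
  have hA₀1 : 1 ≤ A₀ := by rw [hA₀def]; exact le_max_of_le_right (le_max_right _ _)
  refine ⟨(2:ℝ) ^ A₀, Real.one_le_rpow (by norm_num) (by linarith), ?_⟩
  intro H hH α halg
  by_contra hcon
  push_neg at hcon
  have hH1 : (1:ℝ) ≤ H := le_trans (Real.one_le_rpow (by norm_num) (by linarith)) hH
  have hHpos : (0:ℝ) < H := by linarith
  obtain ⟨A, hAdef⟩ : ∃ x:ℝ, x = Real.logb 2 H := ⟨_, rfl⟩
  have hHA : (2:ℝ) ^ A = H := by
    rw [hAdef]; exact Real.rpow_logb (by norm_num) (by norm_num) hHpos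
  have hAA₀ : A₀ ≤ A := by
    have h1 := (Real.logb_le_logb (b := 2) (by norm_num)
      (Real.rpow_pos_of_pos (by norm_num) A₀) hHpos).mpr hH
    rwa [Real.logb_rpow (by norm_num) (by norm_num), ← hAdef] at h1
  have hA1 : 1 ≤ A := by
    have : (1:ℝ) ≤ A₀ := hA₀1
    linarith
  have hAg₁ : γ₁ ≤ g₁ * A := by
    have h1 : γ₁ / g₁ ≤ A := by
      refine le_trans ?_ hAA₀
      rw [hA₀def]
      exact le_max_of_le_left (le_max_left _ _)
    rw [div_le_iff₀ hg₁0] at h1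
    linarith [h1]
  have hAg₂ : γ₂ ≤ g₂ * A := by
    have h1 : γ₂ / g₂ ≤ A := by
      refine le_trans ?_ hAA₀
      rw [hA₀def]
      exact le_max_of_le_left (le_max_right _ _)
    rw [div_le_iff₀ hg₂0] at h1
    linarith [h1]
  have hAτν : τ*ν + 1 ≤ A := by
    refine le_trans ?_ hAA₀
    rw [hA₀def]
    exact le_max_of_le_right (le_max_left _ _)
  obtain ⟨L, hLdef⟩ : ∃ x:ℝ, x = (A + D) / (τ*ν) := ⟨_, rfl⟩
  have hL1 : 1 < L := by
    rw [hLdef, lt_div_iff₀ (by positivity)]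
    linarith
  have hL0 : 0 < L := by linarith
  obtain ⟨ℓ, hℓ1, hLaℓ', haℓU'⟩ := exists_ell ht hn L hL1
  obtain ⟨j, hjdef⟩ : ∃ x:ℕ, x = (ℓ-1) % t + 1 := ⟨_, rfl⟩
  obtain ⟨m, hmdef⟩ : ∃ x:ℕ, x = (ℓ-1) / t := ⟨_, rfl⟩
  have hj1 : 1 ≤ j := by omega
  have hjm : j + t * m = ℓ := by
    rw [hjdef, hmdef]
    have h1 := Nat.mod_add_div (ℓ-1) t
    omega
  have hjt : j - 1 < t := by
    rw [hjdef]
    simp only [Nat.add_sub_cancel]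
    exact Nat.mod_lt _ (by omega)
  obtain ⟨aℓ, haℓdef⟩ : ∃ x:ℕ, x = expSeq t n ℓ := ⟨_, rfl⟩
  obtain ⟨aT, haTdef⟩ : ∃ x:ℕ, x = expSeq t n (ℓ + t) := ⟨_, rfl⟩
  have hLaℓ : L ≤ (aℓ:ℝ) := by rw [haℓdef]; exact hLaℓ'
  have haℓU : (aℓ:ℝ) ≤ β * (L + 1) := by
    rw [haℓdef, hβdef, hBdef, hτdef]
    exact haℓU'
  have haℓ1 : 1 ≤ aℓ := by rw [haℓdef]; exact one_le_expSeq ht hn ℓ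
  have haT_low : B * (aℓ:ℝ) ≤ (aT:ℝ) := by
    have h1 := mul_expSeq_le ht hn ℓ
    rw [hBdef, haℓdef, haTdef]
    exact_mod_cast h1
  have haT_high : (aT:ℝ) ≤ B * (aℓ:ℝ) + B := by
    have h1 := expSeq_le_mul ht hn ℓ
    rw [hBdef, haℓdef, haTdef]
    exact_mod_cast h1
  have hβpos : (0:ℝ) < β := by linarith
  have hB0 : (0:ℝ) ≤ B := by linarith
  have key1 : (aT:ℝ) ≤ c * A := by
    have h2 : B * (aℓ:ℝ) ≤ B * (β * (L+1)) := mul_le_mul_of_nonneg_left haℓU hB0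
    have h1 : (aT:ℝ) ≤ B * (β * (L + 1)) + B := by linarith
    have h3 : B * (β * (L + 1)) + B = (β*(τ+1)/τ) * A + γ₁ := by
      rw [hLdef, hγ₁def, hBeq]
      field_simp
      ring
    rw [h3] at h1
    have h4 : (β*(τ+1)/τ) * A + g₁ * A = c * A := by rw [hg₁def]; ring
    linarith only [h1, h4, hAg₁]
  have key2 : ν * (aℓ:ℝ) + A + D + 1 ≤ c * A := by
    have h1 : ν * (aℓ:ℝ) ≤ ν * (β * (L+1)) := mul_le_mul_of_nonneg_left haℓU (by linarith)
    have h2 : ν * (β * (L + 1)) + A + D + 1 = (β/τ) * A + 1 * A + γ₂ := by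
      rw [hLdef, hγ₂def]
      field_simp
      ring
    have h4 : (β/τ) * A + 1 * A + g₂ * A = c * A := by rw [hg₂def]; ring
    linarith only [h1, h2, h4, hAg₂]
  have key3 : ν * (aℓ:ℝ) + A + D ≤ (aT:ℝ) := by
    have h1 : τ * ν * L ≤ τ * ν * (aℓ:ℝ) := mul_le_mul_of_nonneg_left hLaℓ (by positivity)
    have h2 : τ * ν * L = A + D := by
      rw [hLdef]
      field_simp
    have h3 : B * (aℓ:ℝ) = ν * (aℓ:ℝ) + τ * ν * (aℓ:ℝ) := by rw [hBeq]; ring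
    linarith only [haT_low, h1, h2, h3]
  -- the chosen index as an element of Fin t
  obtain ⟨jF, hjFdef⟩ : ∃ x : Fin t, x = ⟨j-1, hjt⟩ := ⟨_, rfl⟩
  have hjval : (jF:ℕ) + 1 = j := by rw [hjFdef]; simp only [Fin.val_mk]; omega
  obtain ⟨p, hp0, hirr, hdeg, hcoeff, hroot⟩ := halg jF
  have hconj := hcon jF
  rw [hjval] at hconj
  -- the partial sum and the tail
  obtain ⟨r, hrdef⟩ : ∃ x:ℝ,
      x = ∑ i ∈ Finset.range (m+1), (2:ℝ)^(-(expSeq t n (j + t*i) : ℤ)) := ⟨_, rfl⟩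
  obtain ⟨T, hTdef⟩ : ∃ x:ℝ,
      x = ∑' i : ℕ, (2:ℝ)^(-(expSeq t n (j + t*(i + (m+1))) : ℤ)) := ⟨_, rfl⟩
  have hxiT : liouvilleXi t n j = r + T := by
    rw [hrdef, hTdef]; exact xi_eq_partial_add_tail ht hn j hj1 m
  have hTlow : (2:ℝ)^(-(aT:ℤ)) ≤ T := by
    rw [hTdef, haTdef, ← hjm]
    exact tail_lower ht hn j hj1 m
  have hTup : T ≤ 2 * (2:ℝ)^(-(aT:ℤ)) := by
    rw [hTdef, haTdef, ← hjm]
    exact tail_upper ht hn j hj1 m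
  have hT0 : 0 ≤ T := le_trans (by positivity) hTlow
  have hr0 : 0 ≤ r := by
    rw [hrdef]
    exact Finset.sum_nonneg fun i _ => le_of_lt (by positivity)
  have hξ1 : liouvilleXi t n j ≤ 1 := xi_le_one ht hn j hj1
  have hξ0 : 0 ≤ liouvilleXi t n j := xi_nonneg j
  have hr1 : r ≤ 1 := by linarith only [hxiT, hT0, hξ1]
  -- the rational representation
  obtain ⟨P, hPdef⟩ : ∃ x:ℕ,
      x = ∑ i ∈ Finset.range (m+1), 2^(expSeq t n (j + t*m) - expSeq t n (j + t*i)) := ⟨_, rfl⟩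
  have hrP : r = (P:ℝ) / ((2:ℝ)^aℓ) := by
    rw [hrdef, hPdef, haℓdef, ← hjm]
    exact partial_eq_div ht hn j m
  have hcast2 : ((2^aℓ : ℕ) : ℝ) = (2:ℝ)^aℓ := by push_cast; ring
  -- exponent bookkeeping, all in rpow
  have h2pos : (0:ℝ) < 2 := by norm_num
  have hzB : (2:ℝ)^(-(aT:ℤ)) = (2:ℝ) ^ (-((aT:ℕ):ℝ)) := by
    rw [← Real.rpow_intCast 2 (-(aT:ℤ))]
    congr 1
    push_cast
    ring
  have hexpc : κ * (n:ℝ) ^ ((t:ℝ))⁻¹ = c := by rw [hcdef, hνdef, hτdef]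
  have hHc : H ^ (-(κ * (n:ℝ) ^ ((t:ℝ))⁻¹)) = (2:ℝ) ^ (-(c*A)) := by
    rw [hexpc, ← hHA, ← Real.rpow_mul (by norm_num)]
    congr 1
    ring
  -- |ξ - r| = T as complex absolute value
  have habsξr : ‖((liouvilleXi t n j : ℝ):ℂ) - ((r:ℝ):ℂ)‖ = T := by
    rw [show ((liouvilleXi t n j : ℝ):ℂ) - ((r:ℝ):ℂ)
        = (((liouvilleXi t n j - r : ℝ)):ℂ) by push_cast; ring]
    rw [Complex.norm_real, Real.norm_eq_abs, hxiT, show r + T - r = T by ring, abs_of_nonneg hT0]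
  by_cases hpr : Polynomial.aeval r p = 0
  · -- rational root case: α = r, distance is exactly the tail
    obtain ⟨qr, hqrdef⟩ : ∃ x:ℚ, x = (P:ℚ) / 2^aℓ := ⟨_, rfl⟩
    have hqrr : (qr:ℝ) = r := by rw [hqrdef, hrP]; push_cast; ring
    have halpha : α jF = ((qr:ℝ):ℂ) :=
      irreducible_root_eq p hp0 hirr qr (by rw [hqrr]; exact hpr) _ hroot
    have habs : ‖((liouvilleXi t n j : ℝ):ℂ) - α jF‖ = T := by
      rw [halpha, hqrr, habsξr]
    rw [habs] at hconj
    have hTge : H ^ (-(κ * (n:ℝ) ^ ((t:ℝ))⁻¹)) ≤ T := by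
      rw [hHc]
      refine le_trans ?_ (le_trans (le_of_eq hzB.symm) hTlow)
      apply (Real.rpow_le_rpow_left_iff (by norm_num : (1:ℝ) < 2)).mpr
      linarith only [key1]
    linarith only [hconj, hTge]
  · -- Liouville case
    have hrP2 : r = (P:ℝ) / (((2^aℓ : ℕ)):ℝ) := by rw [hrP, hcast2]
    have hne : Polynomial.aeval ((P:ℝ)/(((2^aℓ:ℕ)):ℝ)) p ≠ 0 := by rw [← hrP2]; exact hpr
    have hLiou0 := liouville_lb p n hdeg P (2^aℓ) (by positivity) hne
    rw [← hrP2] at hLiou0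
    have hNn : ((((2^aℓ : ℕ)):ℝ)^n)⁻¹ = (2:ℝ) ^ (-(ν * (aℓ:ℝ))) := by
      rw [hcast2, ← Real.rpow_natCast (2:ℝ) aℓ, ← Real.rpow_natCast ((2:ℝ) ^ ((aℓ:ℕ):ℝ)) n,
        ← Real.rpow_mul (by norm_num), ← Real.rpow_neg (by norm_num)]
      rw [hνdef]
      congr 1
      ring
    rw [hNn] at hLiou0
    have hcplx : Polynomial.aeval ((r:ℝ):ℂ) p = ((Polynomial.aeval r p : ℝ) : ℂ) := by
      rw [Polynomial.aeval_def, Polynomial.aeval_def,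
        show ((Polynomial.eval₂ (algebraMap ℤ ℝ) r p : ℝ) : ℂ)
          = Complex.ofRealHom (Polynomial.eval₂ (algebraMap ℤ ℝ) r p) from rfl,
        Polynomial.hom_eval₂]
      congr 1
    have hHc1 : H ^ (-(κ * (n:ℝ) ^ ((t:ℝ))⁻¹)) ≤ 1 := by
      apply Real.rpow_le_one_of_one_le_of_nonpos hH1
      rw [hexpc]
      linarith only [hc0]
    have hξabs : ‖((liouvilleXi t n j : ℝ):ℂ)‖ ≤ 1 := by
      rw [Complex.norm_real, Real.norm_eq_abs, abs_of_nonneg hξ0]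
      exact hξ1
    have hα2 : ‖α jF‖ ≤ 2 := by
      have h1 := norm_sub_le (((liouvilleXi t n j : ℝ):ℂ))
        ((((liouvilleXi t n j : ℝ):ℂ)) - α jF)
      rw [show (((liouvilleXi t n j : ℝ):ℂ)) - ((((liouvilleXi t n j : ℝ):ℂ)) - α jF)
        = α jF by ring] at h1
      linarith only [h1, hξabs, hconj, hHc1]
    have hr2 : ‖((r:ℝ):ℂ)‖ ≤ 2 := by
      rw [Complex.norm_real, Real.norm_eq_abs, abs_of_nonneg hr0]
      linarith only [hr1]
    have hdb := eval_diff_bound p n hn hdeg H hcoeff ((r:ℝ):ℂ) (α jF) hr2 hα2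
    rw [hroot, sub_zero, hcplx, Complex.norm_real, Real.norm_eq_abs] at hdb
    have hCn' : H * (((n:ℝ)+1) * (n:ℝ) * 2^n) = H * Cn := by rw [hCndef, hνdef]
    rw [hCn'] at hdb
    have hHCn : (0:ℝ) < H * Cn := by positivity
    have hrα : (2:ℝ)^(-(ν*(aℓ:ℝ))) / (H*Cn) ≤ ‖((r:ℝ):ℂ) - α jF‖ := by
      rw [div_le_iff₀ hHCn]
      have h2 := le_trans hLiou0 hdb
      have hcomm : H * Cn * ‖((r:ℝ):ℂ) - α jF‖
          = ‖((r:ℝ):ℂ) - α jF‖ * (H*Cn) := by ring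
      linarith only [h2, hcomm]
    obtain ⟨X, hXdef⟩ : ∃ x:ℝ, x = (2:ℝ) ^ (-(ν*(aℓ:ℝ)) - A - lC) := ⟨_, rfl⟩
    have hX1 : (2:ℝ)^(-(ν*(aℓ:ℝ))) / (H*Cn) = X := by
      rw [hXdef, ← hHA, ← hCeq, ← Real.rpow_add h2pos, ← Real.rpow_sub h2pos]
      congr 1
      ring
    have hXhalf : (2:ℝ) ^ (-(ν*(aℓ:ℝ)) - A - lC - 1) = X / 2 := by
      rw [hXdef, Real.rpow_sub h2pos, Real.rpow_one]
    have hX2 : T ≤ X / 2 := by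
      have he1 : (2:ℝ) ^ (1 - ((aT:ℕ):ℝ)) = 2 * (2:ℝ)^(-((aT:ℕ):ℝ)) := by
        rw [show (1 - ((aT:ℕ):ℝ)) = 1 + (-((aT:ℕ):ℝ)) by ring, Real.rpow_add h2pos,
          Real.rpow_one]
      have h1 : T ≤ (2:ℝ) ^ (1 - ((aT:ℕ):ℝ)) := by rw [he1, ← hzB]; exact hTup
      have h2 : (2:ℝ) ^ (1 - ((aT:ℕ):ℝ)) ≤ (2:ℝ) ^ (-(ν*(aℓ:ℝ)) - A - lC - 1) := by
        apply (Real.rpow_le_rpow_left_iff (by norm_num : (1:ℝ) < 2)).mpr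
        have key3' := key3
        rw [hDdef] at key3'
        linarith only [key3']
      linarith only [h1, h2, hXhalf]
    have hX3 : (2:ℝ) ^ (-(c*A)) ≤ X / 2 := by
      rw [← hXhalf]
      apply (Real.rpow_le_rpow_left_iff (by norm_num : (1:ℝ) < 2)).mpr
      have key2' := key2
      rw [hDdef] at key2'
      linarith only [key2']
    have htri : ‖((r:ℝ):ℂ) - α jF‖
        ≤ T + ‖(((liouvilleXi t n j : ℝ):ℂ)) - α jF‖ := by
      have h0 := norm_add_le (((r:ℝ):ℂ) - ((liouvilleXi t n j : ℝ):ℂ))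
        (((liouvilleXi t n j : ℝ):ℂ) - α jF)
      rw [show ((r:ℝ):ℂ) - ((liouvilleXi t n j : ℝ):ℂ)
          + (((liouvilleXi t n j : ℝ):ℂ) - α jF) = ((r:ℝ):ℂ) - α jF by ring] at h0
      have habs' : ‖((r:ℝ):ℂ) - ((liouvilleXi t n j : ℝ):ℂ)‖ = T := by
        rw [show ((r:ℝ):ℂ) - ((liouvilleXi t n j : ℝ):ℂ)
            = -(((liouvilleXi t n j : ℝ):ℂ) - ((r:ℝ):ℂ)) by ring, norm_neg,
          habsξr]
      rw [habs'] at h0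
      exact h0
    have hfin : H ^ (-(κ * (n:ℝ)^((t:ℝ))⁻¹))
        ≤ ‖(((liouvilleXi t n j : ℝ):ℂ)) - α jF‖ := by
      rw [hHc]
      have h1 : X ≤ ‖((r:ℝ):ℂ) - α jF‖ := hX1 ▸ hrα
      linarith only [hX2, hX3, htri, h1]
    linarith only [hconj, hfin]
end

section
/- Hankel kernel description under shifted bases: Let Q be a polynomial of degree ≤ n over a field of characteristic zero, ξ an element of the field, z_i = (-1)^i i! Q^{(n-i)}(ξ), and y_i = (-1)^i i! Q^{(n-i)}(0). Then the Hankel matrices M_ℓ = (y_{i+j})_{0≤i≤ℓ, 0≤j≤n-ℓ} and N_ℓ = (z_{i+j})_{0≤i≤ℓ, 0≤j≤n-ℓ} have the same rank, since they represent the same bilinear form B_ℓ(F,G) = g(FG,Q) in the bases {T^i} and {(T-ξ)^i} respectively, where g(P,Q) = \sum_{j=0}^n (-1)^j P^{(j)}(0) Q^{(n-j)}(0). -/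
open Polynomial Finset Matrix

section aux
variable {K : Type*} [Field K] [CharZero K]

lemma aux_eval_zero (P : K[X]) (t : ℕ) :
    (Polynomial.derivative^[t] P).eval 0 = (t.factorial : K) * P.coeff t := by
  rw [← coeff_zero_eq_eval_zero, coeff_iterate_derivative]
  simp [nsmul_eq_mul, Nat.descFactorial_self]

lemma aux_taylor {m : ℕ} (P : K[X]) (hP : P.natDegree ≤ m) (ξ : K) :
    P.eval ξ = ∑ t ∈ range (m + 1),
      (Polynomial.derivative^[t] P).eval 0 * ξ ^ t / (t.factorial : K) := by
  rw [eval_eq_sum_range' (lt_of_le_of_lt hP (Nat.lt_succ_self m))]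
  refine sum_congr rfl fun t _ => ?_
  rw [aux_eval_zero]
  have h : (t.factorial : K) ≠ 0 := Nat.cast_ne_zero.mpr t.factorial_ne_zero
  field_simp

lemma aux_keyC (n m : ℕ) (hm : m ≤ n) (Q : K[X]) (hQ : Q.natDegree ≤ n) (ξ : K) :
    (-1) ^ m * (m.factorial : K) * (Polynomial.derivative^[n - m] Q).eval ξ
      = ∑ k ∈ range (m + 1), (m.choose k : K) * (-ξ) ^ (m - k) *
          ((-1) ^ k * (k.factorial : K) * (Polynomial.derivative^[n - k] Q).eval 0) := by
  have hdeg : (Polynomial.derivative^[n - m] Q).natDegree ≤ m :=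
    le_trans (natDegree_iterate_derivative Q (n - m)) (by omega)
  rw [aux_taylor _ hdeg ξ]
  rw [← Finset.sum_range_reflect
    (fun k => (m.choose k : K) * (-ξ) ^ (m - k) *
      ((-1) ^ k * (k.factorial : K) * (Polynomial.derivative^[n - k] Q).eval 0)) (m + 1)]
  rw [Finset.mul_sum]
  refine sum_congr rfl fun t ht => ?_
  have htm : t ≤ m := Nat.lt_succ_iff.mp (mem_range.mp ht)
  have h1 : m + 1 - 1 - t = m - t := by omega
  rw [h1]
  have h2 : Polynomial.derivative^[t] (Polynomial.derivative^[n - m] Q)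
      = Polynomial.derivative^[n - (m - t)] Q := by
    rw [← Function.iterate_add_apply]
    congr 1
    omega
  rw [h2]
  have h3 : m - (m - t) = t := by omega
  rw [h3]
  rw [Nat.cast_choose K (show m - t ≤ m by omega)]
  have h4 : m - (m - t) = t := by omega
  rw [h4]
  have hf1 : (t.factorial : K) ≠ 0 := Nat.cast_ne_zero.mpr t.factorial_ne_zero
  have hf2 : ((m - t).factorial : K) ≠ 0 := Nat.cast_ne_zero.mpr (m - t).factorial_ne_zero
  have h5 : (-ξ) ^ t = (-1) ^ t * ξ ^ t := by rw [neg_pow]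
  have h6 : ((-1 : K)) ^ (m - t) * (-1) ^ t = (-1) ^ m := by
    rw [← pow_add]
    congr 1
    omega
  rw [h5]
  field_simp
  linear_combination (-(m.factorial : K) * ξ ^ t *
    ((Polynomial.derivative^[n - (m - t)] Q).eval 0)) * h6
end aux

section aux2
variable {K : Type*} [Field K] [CharZero K]

lemma aux_swap (i j L R : ℕ) (hi : i < L) (hj : j < R) (F : ℕ → ℕ → K)
    (hF0 : ∀ a b, i < a ∨ j < b → F a b = 0) :
    ∑ k ∈ range (i + j + 1), ∑ a ∈ range (k + 1), F a (k - a)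
      = ∑ a ∈ range L, ∑ b ∈ range R, F a b := by
  rw [Finset.sum_range_diag_flip]
  have inner : ∀ a, ∑ b ∈ range (i + j + 1 - a), F a b = ∑ b ∈ range R, F a b := by
    intro a
    have e1 : ∑ b ∈ range (i + j + 1 - a), F a b
        = ∑ b ∈ range (max (i + j + 1 - a) R), F a b := by
      refine Finset.sum_subset (range_subset_range.mpr (le_max_left _ _)) ?_
      intro b hb hb'
      simp only [mem_range, not_lt] at hb hb'
      exact hF0 a b (by omega)
    have e2 : ∑ b ∈ range R, F a b
        = ∑ b ∈ range (max (i + j + 1 - a) R), F a b := by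
      refine Finset.sum_subset (range_subset_range.mpr (le_max_right _ _)) ?_
      intro b hb hb'
      simp only [mem_range, not_lt] at hb hb'
      exact hF0 a b (by omega)
    rw [e1, e2]
  rw [Finset.sum_congr rfl fun a _ => inner a]
  have e1 : ∑ a ∈ range (i + j + 1), ∑ b ∈ range R, F a b
      = ∑ a ∈ range (max (i + j + 1) L), ∑ b ∈ range R, F a b := by
    refine Finset.sum_subset (range_subset_range.mpr (le_max_left _ _)) ?_
    intro a ha ha'
    simp only [mem_range, not_lt] at ha ha'
    exact Finset.sum_eq_zero fun b _ => hF0 a b (Or.inl (by omega))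
  have e2 : ∑ a ∈ range L, ∑ b ∈ range R, F a b
      = ∑ a ∈ range (max (i + j + 1) L), ∑ b ∈ range R, F a b := by
    refine Finset.sum_subset (range_subset_range.mpr (le_max_right _ _)) ?_
    intro a ha ha'
    simp only [mem_range, not_lt] at ha ha'
    exact Finset.sum_eq_zero fun b _ => hF0 a b (Or.inl (by omega))
  rw [e1, e2]

lemma aux_keyD (n ℓ i j : ℕ) (hi : i ≤ ℓ) (hj : j ≤ n - ℓ) (hℓ : ℓ ≤ n)
    (Q : K[X]) (hQ : Q.natDegree ≤ n) (ξ : K) :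
    (-1) ^ (i + j) * ((i + j).factorial : K) *
        (Polynomial.derivative^[n - (i + j)] Q).eval ξ
      = ∑ a ∈ range (ℓ + 1), ∑ b ∈ range (n - ℓ + 1),
          ((i.choose a : K) * (-ξ) ^ (i - a)) *
          ((-1) ^ (a + b) * ((a + b).factorial : K) *
            (Polynomial.derivative^[n - (a + b)] Q).eval 0) *
          ((j.choose b : K) * (-ξ) ^ (j - b)) := by
  have hm : i + j ≤ n := by omega
  set F : ℕ → ℕ → K := fun a b =>
    ((i.choose a : K) * (-ξ) ^ (i - a)) *
    ((-1) ^ (a + b) * ((a + b).factorial : K) *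
      (Polynomial.derivative^[n - (a + b)] Q).eval 0) *
    ((j.choose b : K) * (-ξ) ^ (j - b)) with hF
  have hF0 : ∀ a b, i < a ∨ j < b → F a b = 0 := by
    intro a b hab
    rcases hab with h | h <;> simp [hF, Nat.choose_eq_zero_of_lt h]
  have step1 : ∀ k ∈ range (i + j + 1),
      ((i + j).choose k : K) * (-ξ) ^ (i + j - k) *
        ((-1) ^ k * (k.factorial : K) * (Polynomial.derivative^[n - k] Q).eval 0)
      = ∑ a ∈ range (k + 1), F a (k - a) := by
    intro k hk
    have hk' : k ≤ i + j := Nat.lt_succ_iff.mp (mem_range.mp hk)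
    rw [Nat.add_choose_eq, Finset.Nat.sum_antidiagonal_eq_sum_range_succ_mk]
    push_cast
    rw [Finset.sum_mul, Finset.sum_mul]
    refine sum_congr rfl fun a ha => ?_
    have hak : a ≤ k := Nat.lt_succ_iff.mp (mem_range.mp ha)
    by_cases hia : a ≤ i ∧ k - a ≤ j
    · have h1 : a + (k - a) = k := by omega
      have h2 : (i - a) + (j - (k - a)) = i + j - k := by omega
      simp only [hF]
      rw [h1, ← h2, pow_add]
      ring
    · have hor : i < a ∨ j < k - a := by omega
      rw [hF0 a (k - a) hor]
      rcases hor with h | h <;> simp [Nat.choose_eq_zero_of_lt h]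
  calc (-1) ^ (i + j) * ((i + j).factorial : K) *
        (Polynomial.derivative^[n - (i + j)] Q).eval ξ
      = ∑ k ∈ range (i + j + 1), ((i + j).choose k : K) * (-ξ) ^ (i + j - k) *
          ((-1) ^ k * (k.factorial : K) * (Polynomial.derivative^[n - k] Q).eval 0) :=
        aux_keyC n (i + j) hm Q hQ ξ
    _ = ∑ k ∈ range (i + j + 1), ∑ a ∈ range (k + 1), F a (k - a) :=
        Finset.sum_congr rfl step1
    _ = ∑ a ∈ range (ℓ + 1), ∑ b ∈ range (n - ℓ + 1), F a b :=
        aux_swap i j (ℓ + 1) (n - ℓ + 1) (by omega) (by omega) F hF0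

end aux2

def auxC {K : Type*} [Field K] (L : ℕ) (ξ : K) : Matrix (Fin L) (Fin L) K :=
  fun i a => (((i : ℕ)).choose (a : ℕ) : K) * (-ξ) ^ ((i : ℕ) - (a : ℕ))

lemma auxC_det {K : Type*} [Field K] (L : ℕ) (ξ : K) : (auxC L ξ).det = 1 := by
  have htri : (auxC L ξ).BlockTriangular OrderDual.toDual := by
    intro i a h
    have hlt : (i : ℕ) < (a : ℕ) := h
    simp [auxC, Nat.choose_eq_zero_of_lt hlt]
  rw [Matrix.det_of_lowerTriangular _ htri]
  simp [auxC]

/-- Hankel matrices in shifted bases have equal rank.  Let `Q` be a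
polynomial of degree `≤ n` over a field `K` of characteristic zero, `ξ ∈ K`,
`z_i = (-1)^i i! Q^{(n-i)}(ξ)` and `y_i = (-1)^i i! Q^{(n-i)}(0)`.  Then the Hankel
matrices `M_ℓ = (y_{i+j})` and `N_ℓ = (z_{i+j})` (of size `(ℓ+1)×(n-ℓ+1)`) have the
same rank: they represent the same bilinear form `B_ℓ(F,G) = g(FG,Q)` in the bases
`{T^i}` and `{(T-ξ)^i}` respectively. -/
theorem stmt15 {K : Type*} [Field K] [CharZero K] (n ℓ : ℕ) (hℓ : ℓ ≤ n)
    (Q : K[X]) (hQ : Q.natDegree ≤ n) (ξ : K) :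
    letI y : ℕ → K := fun i => (-1) ^ i * (i.factorial : K) * (Polynomial.derivative^[n - i] Q).eval 0
    letI z : ℕ → K := fun i => (-1) ^ i * (i.factorial : K) * (Polynomial.derivative^[n - i] Q).eval ξ
    letI M : Matrix (Fin (ℓ + 1)) (Fin (n - ℓ + 1)) K := fun i j => y ((i : ℕ) + (j : ℕ))
    letI N : Matrix (Fin (ℓ + 1)) (Fin (n - ℓ + 1)) K := fun i j => z ((i : ℕ) + (j : ℕ))
    M.rank = N.rank := by
  show Matrix.rank _ = Matrix.rank _
  set M : Matrix (Fin (ℓ + 1)) (Fin (n - ℓ + 1)) K := fun i j =>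
    (-1) ^ ((i : ℕ) + (j : ℕ)) * (((i : ℕ) + (j : ℕ)).factorial : K) *
      (Polynomial.derivative^[n - ((i : ℕ) + (j : ℕ))] Q).eval 0 with hM
  set N : Matrix (Fin (ℓ + 1)) (Fin (n - ℓ + 1)) K := fun i j =>
    (-1) ^ ((i : ℕ) + (j : ℕ)) * (((i : ℕ) + (j : ℕ)).factorial : K) *
      (Polynomial.derivative^[n - ((i : ℕ) + (j : ℕ))] Q).eval ξ with hN
  set A : Matrix (Fin (ℓ + 1)) (Fin (ℓ + 1)) K := auxC (ℓ + 1) ξ with hA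
  set B : Matrix (Fin (n - ℓ + 1)) (Fin (n - ℓ + 1)) K := (auxC (n - ℓ + 1) ξ)ᵀ with hB
  have hNAMB : N = A * M * B := by
    ext i j
    have hi : (i : ℕ) ≤ ℓ := Nat.lt_succ_iff.mp i.isLt
    have hj : (j : ℕ) ≤ n - ℓ := Nat.lt_succ_iff.mp j.isLt
    have e0 : (A * M * B) i j = ∑ b : Fin (n - ℓ + 1), ∑ a : Fin (ℓ + 1),
        A i a * M a b * B b j := by
      simp only [Matrix.mul_apply, Finset.sum_mul]
    have e1 : ∀ b : Fin (n - ℓ + 1), ∑ a : Fin (ℓ + 1), A i a * M a b * B b j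
        = ∑ a ∈ range (ℓ + 1),
            (((i : ℕ).choose a : K) * (-ξ) ^ ((i : ℕ) - a)) *
            ((-1) ^ (a + (b : ℕ)) * ((a + (b : ℕ)).factorial : K) *
              (Polynomial.derivative^[n - (a + (b : ℕ))] Q).eval 0) *
            (((j : ℕ).choose (b : ℕ) : K) * (-ξ) ^ ((j : ℕ) - (b : ℕ))) := fun b =>
      Fin.sum_univ_eq_sum_range (fun a =>
        (((i : ℕ).choose a : K) * (-ξ) ^ ((i : ℕ) - a)) *
        ((-1) ^ (a + (b : ℕ)) * ((a + (b : ℕ)).factorial : K) *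
          (Polynomial.derivative^[n - (a + (b : ℕ))] Q).eval 0) *
        (((j : ℕ).choose (b : ℕ) : K) * (-ξ) ^ ((j : ℕ) - (b : ℕ)))) (ℓ + 1)
    rw [e0, Finset.sum_congr rfl fun b _ => e1 b]
    have e2 : ∑ b : Fin (n - ℓ + 1), (fun b' : ℕ => ∑ a ∈ range (ℓ + 1),
        (((i : ℕ).choose a : K) * (-ξ) ^ ((i : ℕ) - a)) *
        ((-1) ^ (a + b') * ((a + b').factorial : K) *
          (Polynomial.derivative^[n - (a + b')] Q).eval 0) *
        (((j : ℕ).choose b' : K) * (-ξ) ^ ((j : ℕ) - b'))) (b : ℕ)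
        = ∑ b' ∈ range (n - ℓ + 1), ∑ a ∈ range (ℓ + 1),
        (((i : ℕ).choose a : K) * (-ξ) ^ ((i : ℕ) - a)) *
        ((-1) ^ (a + b') * ((a + b').factorial : K) *
          (Polynomial.derivative^[n - (a + b')] Q).eval 0) *
        (((j : ℕ).choose b' : K) * (-ξ) ^ ((j : ℕ) - b')) :=
      Fin.sum_univ_eq_sum_range (fun b' : ℕ => ∑ a ∈ range (ℓ + 1),
        (((i : ℕ).choose a : K) * (-ξ) ^ ((i : ℕ) - a)) *
        ((-1) ^ (a + b') * ((a + b').factorial : K) *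
          (Polynomial.derivative^[n - (a + b')] Q).eval 0) *
        (((j : ℕ).choose b' : K) * (-ξ) ^ ((j : ℕ) - b'))) (n - ℓ + 1)
    rw [show (∑ b : Fin (n - ℓ + 1), ∑ a ∈ range (ℓ + 1),
        (((i : ℕ).choose a : K) * (-ξ) ^ ((i : ℕ) - a)) *
        ((-1) ^ (a + (b : ℕ)) * ((a + (b : ℕ)).factorial : K) *
          (Polynomial.derivative^[n - (a + (b : ℕ))] Q).eval 0) *
        (((j : ℕ).choose (b : ℕ) : K) * (-ξ) ^ ((j : ℕ) - (b : ℕ)))) = _ from e2]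
    rw [Finset.sum_comm]
    exact aux_keyD n ℓ (i : ℕ) (j : ℕ) hi hj hℓ Q hQ ξ
  have hAdet : IsUnit A.det := by rw [hA, auxC_det]; exact isUnit_one
  have hBdet : IsUnit B.det := by rw [hB, Matrix.det_transpose, auxC_det]; exact isUnit_one
  rw [hNAMB, Matrix.rank_mul_eq_left_of_isUnit_det B (A * M) hBdet,
    Matrix.rank_mul_eq_right_of_isUnit_det A M hAdet]
end
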